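/- arXiv:1810.07801 — 5 statements merged into one kernel-verified Lean document; each statement's English description precedes it below -/
import Mathlib

section
/- Under the three-tier association model, the probability that the user associates with the small-cell tier equals A_s = ( 1 − exp(−π·λ_s·(h_m²·P_sm − h_s²)) ) + λ_s/(λ_s + λ_m·P_ms) · ( exp(−π·P_sm·h_m²·(λ_s + λ_m·P_ms) + π·(λ_s·h_s² + λ_m·h_m²)) − exp(−π·h_v²·P_sv·(λ_s + λ_m·P_ms) + π·(λ_s·h_s² + λ_m·h_m²)) ) + λ_s/(λ_s + λ_m·P_ms + λ_v·P_vs) · exp(−π·P_mv·h_v²·(λ_m + λ_s·P_sm + λ_v·P_vm) + π·(λ_m·h_m² + λ_s·h_s² + λ_v·h_v²)). -/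
open MeasureTheory ProbabilityTheory Real
open scoped ENNReal

section helpers
open Set Filter

lemma keyDeriv (c d : ℝ) (hc : 0 < c) (x : ℝ) :
    HasDerivAt (fun x => -(Real.exp (-(π*c*x^2) + d) / (2*π*c)))
      (x * Real.exp (-(π*c*x^2) + d)) x := by
  have h0 : HasDerivAt (fun x : ℝ => x^2) (2*x) x := by simpa using hasDerivAt_pow 2 x
  have h1 : HasDerivAt (fun x : ℝ => -(π*c*x^2) + d) (-(π*c*(2*x))) x :=
    ((h0.const_mul (π*c)).neg).add_const d
  have h2 := h1.exp
  have h3 := (h2.div_const (2*π*c)).neg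
  refine h3.congr_deriv ?_
  have hπ : (0:ℝ) < π := Real.pi_pos
  field_simp

lemma keyIntegrable (c d : ℝ) (hc : 0 < c) :
    Integrable (fun x : ℝ => x * Real.exp (-(π*c*x^2) + d)) := by
  have h := (integrable_mul_exp_neg_mul_sq (show 0 < π*c by positivity)).mul_const (Real.exp d)
  refine h.congr (Filter.Eventually.of_forall fun x => ?_)
  dsimp only
  rw [mul_assoc, ← Real.exp_add]
  ring_nf

lemma keyInterval (c d : ℝ) (hc : 0 < c) {a b : ℝ} (hab : a ≤ b) :
    ∫ x in Set.Ioc a b, x * Real.exp (-(π*c*x^2) + d) =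
      (Real.exp (-(π*c*a^2)+d) - Real.exp (-(π*c*b^2)+d)) / (2*π*c) := by
  rw [← intervalIntegral.integral_of_le hab,
    intervalIntegral.integral_eq_sub_of_hasDerivAt (fun x _ => keyDeriv c d hc x)
      (keyIntegrable c d hc).intervalIntegrable]
  ring

lemma keyIoi (c d : ℝ) (hc : 0 < c) (a : ℝ) :
    ∫ x in Set.Ioi a, x * Real.exp (-(π*c*x^2) + d) = Real.exp (-(π*c*a^2)+d) / (2*π*c) := by
  have htop : Filter.Tendsto (fun x : ℝ => -(Real.exp (-(π*c*x^2) + d) / (2*π*c))) Filter.atTop (nhds 0) := by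
    have h2 : Filter.Tendsto (fun x : ℝ => x^2) Filter.atTop Filter.atTop :=
      tendsto_pow_atTop two_ne_zero
    have h3 : Filter.Tendsto (fun x : ℝ => π*c*x^2) Filter.atTop Filter.atTop :=
      h2.const_mul_atTop (by positivity)
    have h4 : Filter.Tendsto (fun x : ℝ => -(π*c*x^2) + d) Filter.atTop Filter.atBot := by
      apply Filter.tendsto_atBot_add_const_right
      exact Filter.tendsto_neg_atBot_iff.mpr h3
    have h5 := (Real.tendsto_exp_atBot.comp h4).div_const (2*π*c)
    simpa using h5.neg
  rw [MeasureTheory.integral_Ioi_of_hasDerivAt_of_tendsto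
      (Continuous.continuousWithinAt (by fun_prop)) (fun x _ => keyDeriv c d hc x) (keyIntegrable c d hc).integrableOn htop]
  ring


noncomputable def dens (l h : ℝ) : ℝ → ℝ :=
  (Set.Ici h).indicator (fun x => 2*π*l*(x * Real.exp (-(π*l*x^2) + π*l*h^2)))

lemma dens_nonneg (l h : ℝ) (hl : 0 < l) (hh : 0 < h) (x : ℝ) : 0 ≤ dens l h x := by
  unfold dens
  by_cases hx : x ∈ Set.Ici h
  · rw [Set.indicator_of_mem hx]
    have : (0:ℝ) ≤ x := le_trans hh.le hx
    positivity
  · rw [Set.indicator_of_notMem hx]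

lemma dens_meas (l h : ℝ) : Measurable (dens l h) :=
  Measurable.indicator (by fun_prop) measurableSet_Ici

lemma law_eq {Ω : Type*} [MeasureSpace Ω] [IsProbabilityMeasure (ℙ : Measure Ω)]
    (Z : Ω → ℝ) (hZ : Measurable Z) (l h : ℝ) (hl : 0 < l) (hh : 0 < h)
    (hCCDF : ∀ x : ℝ, ℙ {ω | Z ω > x} =
      if x < h then 1 else ENNReal.ofReal (Real.exp (-(π * l * (x ^ 2 - h ^ 2))))) :
    Measure.map Z ℙ = volume.withDensity (fun x => ENNReal.ofReal (dens l h x)) := by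
  set ν := volume.withDensity (fun x => ENNReal.ofReal (dens l h x)) with hν
  have hIoi : ∀ a : ℝ, h ≤ a → ν (Set.Ioi a) = ENNReal.ofReal (Real.exp (-(π*l*a^2) + π*l*h^2)) := by
    intro a ha
    rw [hν, withDensity_apply _ measurableSet_Ioi]
    have h1 : ∀ᵐ x ∂(volume.restrict (Set.Ioi a)), ENNReal.ofReal (dens l h x) =
        ENNReal.ofReal (2*π*l*(x * Real.exp (-(π*l*x^2) + π*l*h^2))) := by
      filter_upwards [ae_restrict_mem measurableSet_Ioi] with x hx
      rw [dens, Set.indicator_of_mem (Set.mem_Ici.mpr (le_trans ha hx.le))]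
    rw [lintegral_congr_ae h1, ← ofReal_integral_eq_lintegral_ofReal]
    · congr 1
      rw [integral_const_mul, keyIoi l (π*l*h^2) hl a,
        mul_div_cancel₀ _ (by positivity : (2*π*l) ≠ 0)]
    · exact ((keyIntegrable l (π*l*h^2) hl).const_mul (2*π*l)).integrableOn
    · filter_upwards [ae_restrict_mem measurableSet_Ioi] with x hx
      have hx0 : (0:ℝ) ≤ x := le_trans (le_trans hh.le ha) hx.le
      positivity
  have hzero : ∀ s : Set ℝ, MeasurableSet s → s ⊆ Set.Iio h →
      ∫⁻ x in s, ENNReal.ofReal (dens l h x) = 0 := by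
    intro s hms hs
    rw [setLIntegral_congr_fun hms (fun x hx => ?_), lintegral_zero]
    rw [dens, Set.indicator_of_notMem (Set.notMem_Ici.mpr (hs hx)), ENNReal.ofReal_zero]
  have hIoiAll : ∀ a : ℝ, ν (Set.Ioi a) =
      ENNReal.ofReal (Real.exp (-(π*l*(max a h)^2) + π*l*h^2)) := by
    intro a
    rcases le_or_gt h a with ha | ha
    · rw [max_eq_left ha]; exact hIoi a ha
    · rw [max_eq_right ha.le, ← hIoi h le_rfl, hν, withDensity_apply _ measurableSet_Ioi,
        withDensity_apply _ measurableSet_Ioi, ← Set.Ioo_union_Ici_eq_Ioi ha,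
        lintegral_union measurableSet_Ici ((Set.Iio_disjoint_Ici le_rfl).mono_left Set.Ioo_subset_Iio_self),
        hzero _ measurableSet_Ioo (fun x hx => hx.2), zero_add,
        ← restrict_Ioi_eq_restrict_Ici]
  have hν1 : ν Set.univ = 1 := by
    have : ν Set.univ = ∫⁻ x, ENNReal.ofReal (dens l h x) := by
      rw [hν, withDensity_apply _ MeasurableSet.univ, Measure.restrict_univ]
    rw [this, ← lintegral_add_compl _ measurableSet_Iio (μ := volume),
      hzero _ measurableSet_Iio le_rfl, zero_add]
    have : (Set.Iio h)ᶜ = Set.Ici h := by simp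
    rw [this, ← restrict_Ioi_eq_restrict_Ici,
      ← withDensity_apply _ measurableSet_Ioi, ← hν, hIoi h le_rfl]
    norm_num
  have hmap : ∀ a : ℝ, Measure.map Z ℙ (Set.Ioi a) =
      ENNReal.ofReal (Real.exp (-(π*l*(max a h)^2) + π*l*h^2)) := by
    intro a
    rw [Measure.map_apply hZ measurableSet_Ioi]
    have : Z ⁻¹' Set.Ioi a = {ω | Z ω > a} := rfl
    rw [this, hCCDF a]
    rcases lt_or_ge a h with ha | ha
    · rw [if_pos ha, max_eq_right ha.le]
      norm_num
    · rw [if_neg (not_lt.mpr ha), max_eq_left ha]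
      congr 1
      ring
  haveI : IsProbabilityMeasure (Measure.map Z ℙ) := Measure.isProbabilityMeasure_map hZ.aemeasurable
  haveI : IsFiniteMeasure ν := ⟨by rw [hν1]; exact ENNReal.one_lt_top⟩
  refine Measure.ext_of_Iic _ _ (fun a => ?_)
  rw [← Set.compl_Ioi, measure_compl measurableSet_Ioi (measure_ne_top _ _),
    measure_compl measurableSet_Ioi (measure_ne_top _ _), measure_univ, hν1, hmap, hIoiAll]

lemma ae_ge {Ω : Type*} [MeasureSpace Ω] [IsProbabilityMeasure (ℙ : Measure Ω)]
    (Z : Ω → ℝ) (hZ : Measurable Z) (l h : ℝ) (hl : 0 < l) (hh : 0 < h)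
    (hlaw : Measure.map Z ℙ = volume.withDensity (fun x => ENNReal.ofReal (dens l h x))) :
    ∀ᵐ ω ∂(ℙ : Measure Ω), h ≤ Z ω := by
  have h0 : ℙ {ω | Z ω < h} = 0 := by
    have h1 : ℙ (Z ⁻¹' Set.Iio h) = (volume.withDensity (fun x => ENNReal.ofReal (dens l h x))) (Set.Iio h) := by
      rw [← Measure.map_apply hZ measurableSet_Iio, hlaw]
    rw [show {ω | Z ω < h} = Z ⁻¹' Set.Iio h from rfl, h1,
      withDensity_apply _ measurableSet_Iio]
    rw [setLIntegral_congr_fun measurableSet_Iio (fun x hx => ?_),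
      lintegral_zero]
    rw [dens, Set.indicator_of_notMem (Set.notMem_Ici.mpr hx), ENNReal.ofReal_zero]
  rw [ae_iff]
  convert h0 using 2
  simp [not_le]

lemma cmp_iff (P Q η : ℝ) (hP : 0 < P) (hQ : 0 < Q) (hη : 0 < η) (u v : ℝ)
    (hu : 0 < u) (hv0 : 0 < v) :
    (P * u ^ (-η) > Q * v ^ (-η)) ↔ Real.sqrt ((Q/P) ^ ((2:ℝ)/η)) * u < v := by
  have hQP : (0:ℝ) < Q / P := div_pos hQ hP
  set r := (Q/P) ^ ((1:ℝ)/η) with hr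
  have hrpos : 0 < r := Real.rpow_pos_of_pos hQP _
  have hsq : Real.sqrt ((Q/P) ^ ((2:ℝ)/η)) = r := by
    rw [show ((2:ℝ)/η) = (1/η) * 2 by ring, Real.rpow_mul hQP.le, Real.rpow_two,
      Real.sqrt_sq hrpos.le]
  have hu' : (0:ℝ) < u ^ η := Real.rpow_pos_of_pos hu η
  have hv' : (0:ℝ) < v ^ η := Real.rpow_pos_of_pos hv0 η
  have hru : (r*u)^η = (Q/P) * u^η := by
    rw [Real.mul_rpow hrpos.le hu.le, hr, ← Real.rpow_mul hQP.le,
      one_div_mul_cancel hη.ne', Real.rpow_one]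
  rw [hsq, Real.rpow_neg hu.le, Real.rpow_neg hv0.le, gt_iff_lt]
  calc Q * (v^η)⁻¹ < P * (u^η)⁻¹ ↔ Q * u^η < P * v^η := by
        rw [← div_eq_mul_inv, ← div_eq_mul_inv, div_lt_div_iff₀ hv' hu']
    _ ↔ (r*u)^η < v^η := by
        rw [hru, div_mul_eq_mul_div, div_lt_iff₀ hP, mul_comm (v^η) P]
    _ ↔ r*u < v := Real.rpow_lt_rpow_iff (by positivity) hv0.le hη

end helpers

section main
open Set Filter










set_option maxHeartbeats 1000000 in
theorem stmt1
    {Ω : Type*} [MeasureSpace Ω] [IsProbabilityMeasure (ℙ : Measure Ω)]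
    (Zm Zs Zv : Ω → ℝ)
    (hZmMeas : Measurable Zm) (hZsMeas : Measurable Zs) (hZvMeas : Measurable Zv)
    (hIndep : iIndepFun ![Zm, Zs, Zv] ℙ)
    (lm ls lv hm hs hv Pm Ps Pv eta : ℝ)
    (hlm : 0 < lm) (hls : 0 < ls) (hlv : 0 < lv)
    (hhm : 0 < hm) (hhs : 0 < hs) (hhv : 0 < hv)
    (hPm : 0 < Pm) (hPs : 0 < Ps) (hPv : 0 < Pv)
    (heta : 2 < eta)
    (Psm Pms Pmv Pvm Psv Pvs : ℝ)
    (hPsm : Psm = (Ps / Pm) ^ (2 / eta)) (hPms : Pms = (Pm / Ps) ^ (2 / eta))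
    (hPmv : Pmv = (Pm / Pv) ^ (2 / eta)) (hPvm : Pvm = (Pv / Pm) ^ (2 / eta))
    (hPsv : Psv = (Ps / Pv) ^ (2 / eta)) (hPvs : Pvs = (Pv / Ps) ^ (2 / eta))
    (hZmCCDF : ∀ x : ℝ, ℙ {ω | Zm ω > x} =
      if x < hm then 1 else ENNReal.ofReal (Real.exp (-(π * lm * (x ^ 2 - hm ^ 2)))))
    (hZsCCDF : ∀ x : ℝ, ℙ {ω | Zs ω > x} =
      if x < hs then 1 else ENNReal.ofReal (Real.exp (-(π * ls * (x ^ 2 - hs ^ 2)))))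
    (hZvCCDF : ∀ x : ℝ, ℙ {ω | Zv ω > x} =
      if x < hv then 1 else ENNReal.ofReal (Real.exp (-(π * lv * (x ^ 2 - hv ^ 2)))))
    (hsm : hs < hm) (hmv : hm < hv)
    (hsm2 : hs ^ 2 ≤ Psm * hm ^ 2) (hmv2 : hm ^ 2 ≤ Pmv * hv ^ 2) :
    (ℙ {ω | Ps * Zs ω ^ (-eta) > Pm * Zm ω ^ (-eta) ∧ Ps * Zs ω ^ (-eta) > Pv * Zv ω ^ (-eta)}).toReal =
      (1 - Real.exp (-(π * ls * (hm ^ 2 * Psm - hs ^ 2)))) +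
      ls / (ls + lm * Pms) *
        (Real.exp (-(π * Psm * hm ^ 2 * (ls + lm * Pms)) + π * (ls * hs ^ 2 + lm * hm ^ 2)) -
          Real.exp (-(π * hv ^ 2 * Psv * (ls + lm * Pms)) + π * (ls * hs ^ 2 + lm * hm ^ 2))) +
      ls / (ls + lm * Pms + lv * Pvs) *
        Real.exp (-(π * Pmv * hv ^ 2 * (lm + ls * Psm + lv * Pvm)) +
          π * (lm * hm ^ 2 + ls * hs ^ 2 + lv * hv ^ 2)) := by
  have hηpos : (0:ℝ) < eta := by linarith
  have hPsm0 : 0 < Psm := by rw [hPsm]; positivity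
  have hPms0 : 0 < Pms := by rw [hPms]; positivity
  have hPmv0 : 0 < Pmv := by rw [hPmv]; positivity
  have hPvm0 : 0 < Pvm := by rw [hPvm]; positivity
  have hPsv0 : 0 < Psv := by rw [hPsv]; positivity
  have hPvs0 : 0 < Pvs := by rw [hPvs]; positivity
  have hMulPmsPsm : Pms * Psm = 1 := by
    rw [hPms, hPsm, ← Real.mul_rpow (by positivity) (by positivity),
      show (Pm/Ps) * (Ps/Pm) = 1 by field_simp, Real.one_rpow]
  have hMulPvsPsv : Pvs * Psv = 1 := by
    rw [hPvs, hPsv, ← Real.mul_rpow (by positivity) (by positivity),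
      show (Pv/Ps) * (Ps/Pv) = 1 by field_simp, Real.one_rpow]
  have hMulPmsPsv : Pms * Psv = Pmv := by
    rw [hPms, hPsv, hPmv, ← Real.mul_rpow (by positivity) (by positivity),
      show (Pm/Ps) * (Ps/Pv) = Pm/Pv by field_simp]
  have hMulPvmPmv : Pvm * Pmv = 1 := by
    rw [hPvm, hPmv, ← Real.mul_rpow (by positivity) (by positivity),
      show (Pv/Pm) * (Pm/Pv) = 1 by field_simp, Real.one_rpow]
  have hMulPsmPmv : Psm * Pmv = Psv := by
    rw [hPsm, hPmv, hPsv, ← Real.mul_rpow (by positivity) (by positivity),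
      show (Ps/Pm) * (Pm/Pv) = Ps/Pv by field_simp]
  -- laws
  have lawm := law_eq Zm hZmMeas lm hm hlm hhm hZmCCDF
  have laws := law_eq Zs hZsMeas ls hs hls hhs hZsCCDF
  have lawv := law_eq Zv hZvMeas lv hv hlv hhv hZvCCDF
  have aem := ae_ge Zm hZmMeas lm hm hlm hhm lawm
  have aes := ae_ge Zs hZsMeas ls hs hls hhs laws
  have aev := ae_ge Zv hZvMeas lv hv hlv hhv lawv
  set sa := Real.sqrt Pms with hsa
  set sb := Real.sqrt Pvs with hsb
  have hsa0 : 0 < sa := Real.sqrt_pos.mpr hPms0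
  have hsb0 : 0 < sb := Real.sqrt_pos.mpr hPvs0
  have hsa2 : sa^2 = Pms := Real.sq_sqrt hPms0.le
  have hsb2 : sb^2 = Pvs := Real.sq_sqrt hPvs0.le
  -- event equality
  have hEvent : ℙ {ω | Ps * Zs ω ^ (-eta) > Pm * Zm ω ^ (-eta) ∧ Ps * Zs ω ^ (-eta) > Pv * Zv ω ^ (-eta)}
      = ℙ {ω | sa * Zs ω < Zm ω ∧ sb * Zs ω < Zv ω} := by
    apply measure_congr
    rw [Filter.eventuallyEq_set]
    filter_upwards [aem, aes, aev] with ω h1 h2 h3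
    have hZm0 : 0 < Zm ω := lt_of_lt_of_le hhm h1
    have hZs0 : 0 < Zs ω := lt_of_lt_of_le hhs h2
    have hZv0 : 0 < Zv ω := lt_of_lt_of_le hhv h3
    rw [hsa, hsb, hPms, hPvs]
    exact and_congr (cmp_iff Ps Pm eta hPs hPm hηpos _ _ hZs0 hZm0)
      (cmp_iff Ps Pv eta hPs hPv hηpos _ _ hZs0 hZv0)
  -- independence
  have hMeasMulti : ∀ i, Measurable (![Zm, Zs, Zv] i) := by
    intro i; fin_cases i
    · exact hZmMeas
    · exact hZsMeas
    · exact hZvMeas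
  have hPairMeas : Measurable fun ω => (Zs ω, (Zm ω, Zv ω)) :=
    hZsMeas.prodMk (hZmMeas.prodMk hZvMeas)
  have hindep1 : IndepFun Zs (fun ω => (Zm ω, Zv ω)) ℙ := by
    have := (hIndep.indepFun_prodMk hMeasMulti 0 2 1 (by decide) (by decide)).symm
    simpa using this
  have hindep2 : IndepFun Zm Zv ℙ := by
    simpa using hIndep.indepFun (show (0:Fin 3) ≠ 2 by decide)
  have hmapPair : Measure.map (fun ω => (Zs ω, (Zm ω, Zv ω))) ℙ
      = (Measure.map Zs ℙ).prod (Measure.map (fun ω => (Zm ω, Zv ω)) ℙ) :=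
    (indepFun_iff_map_prod_eq_prod_map_map hZsMeas.aemeasurable
      (hZmMeas.prodMk hZvMeas).aemeasurable).mp hindep1
  have hmapMV : Measure.map (fun ω => (Zm ω, Zv ω)) ℙ
      = (Measure.map Zm ℙ).prod (Measure.map Zv ℙ) :=
    (indepFun_iff_map_prod_eq_prod_map_map hZmMeas.aemeasurable hZvMeas.aemeasurable).mp hindep2
  have hSmeas : MeasurableSet {p : ℝ × ℝ × ℝ | sa * p.1 < p.2.1 ∧ sb * p.1 < p.2.2} := by
    have hrw : {p : ℝ × ℝ × ℝ | sa * p.1 < p.2.1 ∧ sb * p.1 < p.2.2}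
        = {p : ℝ × ℝ × ℝ | sa * p.1 < p.2.1} ∩ {p : ℝ × ℝ × ℝ | sb * p.1 < p.2.2} := rfl
    rw [hrw]
    exact (measurableSet_lt (measurable_fst.const_mul sa)
        (measurable_fst.comp measurable_snd)).inter
      (measurableSet_lt (measurable_fst.const_mul sb) (measurable_snd.comp measurable_snd))
  have hcalc1 : ℙ {ω | sa * Zs ω < Zm ω ∧ sb * Zs ω < Zv ω}
      = ∫⁻ s, ℙ {ω | Zm ω > sa*s} * ℙ {ω | Zv ω > sb*s} ∂(Measure.map Zs ℙ) := by
    have hpre : {ω | sa * Zs ω < Zm ω ∧ sb * Zs ω < Zv ω}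
        = (fun ω => (Zs ω, (Zm ω, Zv ω))) ⁻¹'
            {p : ℝ × ℝ × ℝ | sa * p.1 < p.2.1 ∧ sb * p.1 < p.2.2} := rfl
    rw [hpre, ← Measure.map_apply hPairMeas hSmeas, hmapPair, Measure.prod_apply hSmeas]
    apply lintegral_congr
    intro s
    have hps : (Prod.mk s ⁻¹' {p : ℝ × ℝ × ℝ | sa * p.1 < p.2.1 ∧ sb * p.1 < p.2.2})
        = Set.Ioi (sa*s) ×ˢ Set.Ioi (sb*s) := rfl
    rw [hps, hmapMV, Measure.prod_prod, Measure.map_apply hZmMeas measurableSet_Ioi,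
      Measure.map_apply hZvMeas measurableSet_Ioi]
    rfl
  -- survival functions
  set Fm : ℝ → ℝ := fun x => if x < hm then 1 else Real.exp (-(π * lm * (x^2 - hm^2))) with hFm
  set Fv : ℝ → ℝ := fun x => if x < hv then 1 else Real.exp (-(π * lv * (x^2 - hv^2))) with hFv
  have hFmMeas : Measurable Fm := Measurable.ite measurableSet_Iio measurable_const (by fun_prop)
  have hFvMeas : Measurable Fv := Measurable.ite measurableSet_Iio measurable_const (by fun_prop)
  have hFm01 : ∀ x, 0 ≤ Fm x ∧ Fm x ≤ 1 := by
    intro x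
    rw [hFm]; by_cases h : x < hm
    · simp [h]
    · simp only [if_neg h]
      refine ⟨(Real.exp_pos _).le, Real.exp_le_one_iff.mpr ?_⟩
      have hx : hm ≤ x := not_lt.mp h
      have hxx : 0 ≤ x^2 - hm^2 := by nlinarith
      have := mul_nonneg (mul_nonneg Real.pi_pos.le hlm.le) hxx
      linarith
  have hFv01 : ∀ x, 0 ≤ Fv x ∧ Fv x ≤ 1 := by
    intro x
    rw [hFv]; by_cases h : x < hv
    · simp [h]
    · simp only [if_neg h]
      refine ⟨(Real.exp_pos _).le, Real.exp_le_one_iff.mpr ?_⟩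
      have hx : hv ≤ x := not_lt.mp h
      have hxx : 0 ≤ x^2 - hv^2 := by nlinarith
      have := mul_nonneg (mul_nonneg Real.pi_pos.le hlv.le) hxx
      linarith
  have hCCm : ∀ x, ℙ {ω | Zm ω > x} = ENNReal.ofReal (Fm x) := by
    intro x; rw [hZmCCDF x, hFm]; by_cases h : x < hm <;> simp [h]
  have hCCv : ∀ x, ℙ {ω | Zv ω > x} = ENNReal.ofReal (Fv x) := by
    intro x; rw [hZvCCDF x, hFv]; by_cases h : x < hv <;> simp [h]
  set φ : ℝ → ℝ := fun s => dens ls hs s * (Fm (sa*s) * Fv (sb*s)) with hφ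
  have hφnonneg : ∀ s, 0 ≤ φ s := fun s =>
    mul_nonneg (dens_nonneg ls hs hls hhs s) (mul_nonneg (hFm01 _).1 (hFv01 _).1)
  have hφmeas : Measurable φ :=
    (dens_meas ls hs).mul ((hFmMeas.comp (measurable_id.const_mul sa)).mul
      (hFvMeas.comp (measurable_id.const_mul sb)))
  have hcalc2 : ∫⁻ s, ℙ {ω | Zm ω > sa*s} * ℙ {ω | Zv ω > sb*s} ∂(Measure.map Zs ℙ)
      = ∫⁻ s, ENNReal.ofReal (φ s) := by
    rw [laws, lintegral_withDensity_eq_lintegral_mul _ (dens_meas ls hs).ennreal_ofReal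
      (by simp_rw [hCCm, hCCv]; fun_prop)]
    apply lintegral_congr
    intro s
    simp only [Pi.mul_apply]
    rw [hCCm, hCCv, hφ, ← ENNReal.ofReal_mul (hFm01 _).1,
      ← ENNReal.ofReal_mul (dens_nonneg ls hs hls hhs s)]
  have hIntDens : Integrable (dens ls hs) := by
    rw [show dens ls hs = (Set.Ici hs).indicator
        (fun x => 2*π*ls*(x * Real.exp (-(π*ls*x^2) + π*ls*hs^2))) from rfl]
    exact (integrable_indicator_iff measurableSet_Ici).mpr
      (((keyIntegrable ls (π*ls*hs^2) hls).const_mul (2*π*ls)).integrableOn)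
  have hφInt : Integrable φ := by
    refine hIntDens.mono' hφmeas.aestronglyMeasurable (Filter.Eventually.of_forall fun s => ?_)
    rw [Real.norm_eq_abs, abs_of_nonneg (hφnonneg s)]
    calc φ s ≤ dens ls hs s * 1 := by
          refine mul_le_mul_of_nonneg_left ?_ (dens_nonneg ls hs hls hhs s)
          exact mul_le_one₀ (hFm01 _).2 (hFv01 _).1 (hFv01 _).2
      _ = dens ls hs s := mul_one _
  have hcalc3 : ∫⁻ s, ENNReal.ofReal (φ s) = ENNReal.ofReal (∫ s, φ s) :=
    (ofReal_integral_eq_lintegral_ofReal hφInt (Filter.Eventually.of_forall hφnonneg)).symm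
  -- geometry
  set A := hm * Real.sqrt Psm with hA
  set B := hv * Real.sqrt Psv with hB
  have hA0 : 0 < A := by rw [hA]; positivity
  have hB0 : 0 < B := by rw [hB]; positivity
  have hA2 : A^2 = Psm * hm^2 := by rw [hA, mul_pow, Real.sq_sqrt hPsm0.le]; ring
  have hB2 : B^2 = Psv * hv^2 := by rw [hB, mul_pow, Real.sq_sqrt hPsv0.le]; ring
  have hsA : hs ≤ A := by
    have h1 : hs^2 ≤ A^2 := by rw [hA2]; exact hsm2
    calc hs = Real.sqrt (hs^2) := (Real.sqrt_sq hhs.le).symm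
      _ ≤ Real.sqrt (A^2) := Real.sqrt_le_sqrt h1
      _ = A := Real.sqrt_sq hA0.le
  have hAB : A ≤ B := by
    have h1 : A^2 ≤ B^2 := by
      rw [hA2, hB2, ← hMulPsmPmv, mul_assoc]
      exact mul_le_mul_of_nonneg_left hmv2 hPsm0.le
    calc A = Real.sqrt (A^2) := (Real.sqrt_sq hA0.le).symm
      _ ≤ Real.sqrt (B^2) := Real.sqrt_le_sqrt h1
      _ = B := Real.sqrt_sq hB0.le
  have hsaA : sa * A = hm := by
    rw [hsa, hA, show Real.sqrt Pms * (hm * Real.sqrt Psm) = hm * (Real.sqrt Pms * Real.sqrt Psm) by ring,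
      ← Real.sqrt_mul hPms0.le, hMulPmsPsm, Real.sqrt_one, mul_one]
  have hsbB : sb * B = hv := by
    rw [hsb, hB, show Real.sqrt Pvs * (hv * Real.sqrt Psv) = hv * (Real.sqrt Pvs * Real.sqrt Psv) by ring,
      ← Real.sqrt_mul hPvs0.le, hMulPvsPsv, Real.sqrt_one, mul_one]
  have hFmOne : ∀ x, x ≤ hm → Fm x = 1 := by
    intro x hx
    rw [hFm]
    rcases lt_or_eq_of_le hx with h | h
    · simp [h]
    · simp [h]
  have hFvOne : ∀ x, x ≤ hv → Fv x = 1 := by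
    intro x hx
    rw [hFv]
    rcases lt_or_eq_of_le hx with h | h
    · simp [h]
    · simp [h]
  have hFmExp : ∀ x, hm ≤ x → Fm x = Real.exp (-(π*lm*x^2) + π*lm*hm^2) := by
    intro x hx
    rw [hFm]; simp only [if_neg (not_lt.mpr hx)]
    congr 1; ring
  have hFvExp : ∀ x, hv ≤ x → Fv x = Real.exp (-(π*lv*x^2) + π*lv*hv^2) := by
    intro x hx
    rw [hFv]; simp only [if_neg (not_lt.mpr hx)]
    congr 1; ring
  set ψ : ℝ → ℝ := fun s => 2*π*ls*(s * Real.exp (-(π*ls*s^2) + π*ls*hs^2)) * (Fm (sa*s) * Fv (sb*s)) with hψ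
  have hφind : φ = (Set.Ici hs).indicator ψ := by
    funext s
    by_cases hx : s ∈ Set.Ici hs
    · simp only [hφ, hψ, dens, Set.indicator_of_mem hx]
    · simp only [hφ, dens, Set.indicator_of_notMem hx, zero_mul]
  have hψInt : IntegrableOn ψ (Set.Ioi hs) := by
    have h1 : IntegrableOn φ (Set.Ioi hs) := hφInt.integrableOn
    refine h1.congr_fun (fun x hx => ?_) measurableSet_Ioi
    rw [hφind, Set.indicator_of_mem (Set.mem_Ici.mpr (le_of_lt hx))]
  have hIφmain : ∫ s, φ s = (1 - Real.exp (-(π * ls * (hm ^ 2 * Psm - hs ^ 2)))) +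
      ls / (ls + lm * Pms) *
        (Real.exp (-(π * Psm * hm ^ 2 * (ls + lm * Pms)) + π * (ls * hs ^ 2 + lm * hm ^ 2)) -
          Real.exp (-(π * hv ^ 2 * Psv * (ls + lm * Pms)) + π * (ls * hs ^ 2 + lm * hm ^ 2))) +
      ls / (ls + lm * Pms + lv * Pvs) *
        Real.exp (-(π * Pmv * hv ^ 2 * (lm + ls * Psm + lv * Pvm)) +
          π * (lm * hm ^ 2 + ls * hs ^ 2 + lv * hv ^ 2)) := by
    rw [hφind, MeasureTheory.integral_indicator measurableSet_Ici,
      MeasureTheory.integral_Ici_eq_integral_Ioi,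
      ← Set.Ioc_union_Ioi_eq_Ioi hsA,
      MeasureTheory.setIntegral_union (Set.Ioc_disjoint_Ioi le_rfl) measurableSet_Ioi
        (hψInt.mono_set Set.Ioc_subset_Ioi_self) (hψInt.mono_set (Set.Ioi_subset_Ioi hsA)),
      ← Set.Ioc_union_Ioi_eq_Ioi hAB,
      MeasureTheory.setIntegral_union (Set.Ioc_disjoint_Ioi le_rfl) measurableSet_Ioi
        ((hψInt.mono_set (Set.Ioi_subset_Ioi hsA)).mono_set Set.Ioc_subset_Ioi_self)
        (hψInt.mono_set (Set.Ioi_subset_Ioi (le_trans hsA hAB)))]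
    have hp1 : ∫ s in Set.Ioc hs A, ψ s = 1 - Real.exp (-(π*ls*A^2) + π*ls*hs^2) := by
      rw [MeasureTheory.setIntegral_congr_fun measurableSet_Ioc
        (g := fun s => 2*π*ls*(s * Real.exp (-(π*ls*s^2) + π*ls*hs^2))) ?_]
      · rw [integral_const_mul, keyInterval ls (π*ls*hs^2) hls hsA,
          mul_div_cancel₀ _ (by positivity : (2*π*ls) ≠ 0),
          show -(π*ls*hs^2) + π*ls*hs^2 = 0 by ring, Real.exp_zero]
      · intro s hs'
        have h1 : sa*s ≤ hm := by
          rw [← hsaA]; exact mul_le_mul_of_nonneg_left hs'.2 hsa0.le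
        have h2 : sb*s ≤ hv := by
          rw [← hsbB]; exact mul_le_mul_of_nonneg_left (le_trans hs'.2 hAB) hsb0.le
        simp only [hψ]
        rw [hFmOne _ h1, hFvOne _ h2]
        ring
    have hp2 : ∫ s in Set.Ioc A B, ψ s = ls/(ls+lm*Pms) *
        (Real.exp (-(π*(ls+lm*Pms)*A^2) + (π*ls*hs^2+π*lm*hm^2))
          - Real.exp (-(π*(ls+lm*Pms)*B^2) + (π*ls*hs^2+π*lm*hm^2))) := by
      rw [MeasureTheory.setIntegral_congr_fun measurableSet_Ioc
        (g := fun s => 2*π*ls*(s * Real.exp (-(π*(ls+lm*Pms)*s^2) + (π*ls*hs^2+π*lm*hm^2)))) ?_]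
      · rw [integral_const_mul, keyInterval (ls+lm*Pms) _ (by positivity) hAB]
        field_simp
      · intro s hs'
        have h1 : hm ≤ sa*s := by
          rw [← hsaA]; exact mul_le_mul_of_nonneg_left hs'.1.le hsa0.le
        have h2 : sb*s ≤ hv := by
          rw [← hsbB]; exact mul_le_mul_of_nonneg_left hs'.2 hsb0.le
        simp only [hψ]
        rw [hFmExp _ h1, hFvOne _ h2, mul_one, mul_pow, hsa2]
        rw [show 2*π*ls*(s * Real.exp (-(π*ls*s^2) + π*ls*hs^2)) * Real.exp (-(π*lm*(Pms*s^2)) + π*lm*hm^2)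
            = 2*π*ls*(s * (Real.exp (-(π*ls*s^2) + π*ls*hs^2) * Real.exp (-(π*lm*(Pms*s^2)) + π*lm*hm^2))) by ring,
          ← Real.exp_add,
          show (-(π*ls*s^2) + π*ls*hs^2) + (-(π*lm*(Pms*s^2)) + π*lm*hm^2)
            = -(π*(ls+lm*Pms)*s^2) + (π*ls*hs^2+π*lm*hm^2) by ring]
    have hp3 : ∫ s in Set.Ioi B, ψ s = ls/(ls+lm*Pms+lv*Pvs) *
        Real.exp (-(π*(ls+lm*Pms+lv*Pvs)*B^2) + (π*ls*hs^2+π*lm*hm^2+π*lv*hv^2)) := by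
      rw [MeasureTheory.setIntegral_congr_fun measurableSet_Ioi
        (g := fun s => 2*π*ls*(s * Real.exp (-(π*(ls+lm*Pms+lv*Pvs)*s^2) + (π*ls*hs^2+π*lm*hm^2+π*lv*hv^2)))) ?_]
      · rw [integral_const_mul, keyIoi (ls+lm*Pms+lv*Pvs) _ (by positivity) B]
        field_simp
      · intro s hs'
        have h1 : hm ≤ sa*s := by
          rw [← hsaA]
          exact mul_le_mul_of_nonneg_left (le_trans hAB (le_of_lt hs')) hsa0.le
        have h2 : hv ≤ sb*s := by
          rw [← hsbB]; exact mul_le_mul_of_nonneg_left (le_of_lt hs') hsb0.le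
        simp only [hψ]
        rw [hFmExp _ h1, hFvExp _ h2, mul_pow, mul_pow, hsa2, hsb2]
        rw [show 2*π*ls*(s * Real.exp (-(π*ls*s^2) + π*ls*hs^2)) *
              (Real.exp (-(π*lm*(Pms*s^2)) + π*lm*hm^2) * Real.exp (-(π*lv*(Pvs*s^2)) + π*lv*hv^2))
            = 2*π*ls*(s * (Real.exp (-(π*ls*s^2) + π*ls*hs^2) * (Real.exp (-(π*lm*(Pms*s^2)) + π*lm*hm^2)
                * Real.exp (-(π*lv*(Pvs*s^2)) + π*lv*hv^2)))) by ring,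
          ← Real.exp_add, ← Real.exp_add,
          show (-(π*ls*s^2) + π*ls*hs^2) + ((-(π*lm*(Pms*s^2)) + π*lm*hm^2) + (-(π*lv*(Pvs*s^2)) + π*lv*hv^2))
            = -(π*(ls+lm*Pms+lv*Pvs)*s^2) + (π*ls*hs^2+π*lm*hm^2+π*lv*hv^2) by ring]
    rw [hp1, hp2, hp3, hA2, hB2]
    have harg1 : -(π*ls*(Psm*hm^2)) + π*ls*hs^2 = -(π * ls * (hm ^ 2 * Psm - hs ^ 2)) := by ring
    have harg2 : -(π*(ls+lm*Pms)*(Psm*hm^2)) + (π*ls*hs^2+π*lm*hm^2)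
        = -(π * Psm * hm ^ 2 * (ls + lm * Pms)) + π * (ls * hs ^ 2 + lm * hm ^ 2) := by ring
    have harg3 : -(π*(ls+lm*Pms)*(Psv*hv^2)) + (π*ls*hs^2+π*lm*hm^2)
        = -(π * hv ^ 2 * Psv * (ls + lm * Pms)) + π * (ls * hs ^ 2 + lm * hm ^ 2) := by ring
    have harg4 : -(π*(ls+lm*Pms+lv*Pvs)*(Psv*hv^2)) + (π*ls*hs^2+π*lm*hm^2+π*lv*hv^2)
        = -(π * Pmv * hv ^ 2 * (lm + ls * Psm + lv * Pvm)) +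
          π * (lm * hm ^ 2 + ls * hs ^ 2 + lv * hv ^ 2) := by
      linear_combination (-(π*hv^2*lm)) * hMulPmsPsv + (-(π*hv^2*lv)) * hMulPvsPsv +
        (π*hv^2*ls) * hMulPsmPmv + (π*hv^2*lv) * hMulPvmPmv
    rw [harg1, harg2, harg3, harg4]
    ring
  -- conclusion
  rw [hEvent, hcalc1, hcalc2, hcalc3, ENNReal.toReal_ofReal (integral_nonneg hφnonneg), hIφmain]

end main
end

section
/- Under the three-tier association model, the probability that the user associates with the UAV tier equals A_v = λ_v/(λ_v + λ_m·P_mv + λ_s·P_sv) · exp(−π·h_v²·(λ_v + λ_m·P_mv + λ_s·P_sv) + π·(λ_m·h_m² + λ_s·h_s² + λ_v·h_v²)). -/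
open MeasureTheory ProbabilityTheory Real Filter Set
open scoped ENNReal

lemma auxDeriv (K C D : ℝ) (hC : C ≠ 0) (t : ℝ) :
    HasDerivAt (fun z => -(K/(2*C)) * Real.exp (-(C*z^2 - D))) (K*t*Real.exp (-(C*t^2 - D))) t := by
  have h1 : HasDerivAt (fun z : ℝ => z^2) (2*t) t := by
    simpa using hasDerivAt_pow 2 t
  have h0 : HasDerivAt (fun z : ℝ => -(C*z^2 - D)) (-(C*(2*t))) t := by
    exact ((h1.const_mul C).sub_const D).neg
  have h2 := (h0.exp).const_mul (-(K/(2*C)))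
  refine h2.congr_deriv ?_
  have hCC : K/(2*C) * (C*(2*t)) = K*t := by
    rw [show K/(2*C) * (C*(2*t)) = K*t*(C/C) by ring, div_self hC, mul_one]
  linear_combination (Real.exp (-(C*t^2 - D))) * hCC

lemma auxTendsto (K C D : ℝ) (hC : 0 < C) :
    Filter.Tendsto (fun z : ℝ => -(K/(2*C)) * Real.exp (-(C*z^2 - D))) Filter.atTop (nhds 0) := by
  have h2 : Tendsto (fun z : ℝ => z^2) atTop atTop := tendsto_pow_atTop two_ne_zero
  have h3 : Tendsto (fun z : ℝ => C * z^2) atTop atTop := h2.const_mul_atTop hC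
  have h4 : Tendsto (fun z : ℝ => C*z^2 - D) atTop atTop := by
    simpa [sub_eq_add_neg] using tendsto_atTop_add_const_right atTop (-D) h3
  have h1 : Tendsto (fun z : ℝ => -(C*z^2 - D)) atTop atBot := tendsto_neg_atBot_iff.2 h4
  have h5 := Real.tendsto_exp_atBot.comp h1
  have h6 := h5.const_mul (-(K/(2*C)))
  simpa using h6

lemma auxIntegrableOn (K C D aa : ℝ) (hK : 0 ≤ K) (hC : 0 < C) (haa : 0 ≤ aa) :
    MeasureTheory.IntegrableOn (fun z => K*z*Real.exp (-(C*z^2 - D))) (Set.Ioi aa) :=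
  integrableOn_Ioi_deriv_of_nonneg' (fun t _ => auxDeriv K C D hC.ne' t)
    (fun t ht => mul_nonneg (mul_nonneg hK (haa.trans (Set.mem_Ioi.mp ht).le)) (Real.exp_nonneg _))
    (auxTendsto K C D hC)

lemma auxIntegral (K C D aa : ℝ) (hK : 0 ≤ K) (hC : 0 < C) (haa : 0 ≤ aa) :
    ∫ z in Set.Ioi aa, K*z*Real.exp (-(C*z^2 - D)) = K/(2*C) * Real.exp (-(C*aa^2 - D)) := by
  rw [integral_Ioi_of_hasDerivAt_of_nonneg' (fun t _ => auxDeriv K C D hC.ne' t)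
    (fun t ht => mul_nonneg (mul_nonneg hK (haa.trans (Set.mem_Ioi.mp ht).le)) (Real.exp_nonneg _))
    (auxTendsto K C D hC)]
  ring

lemma key_iff (P Q e x y : ℝ) (hP : 0 < P) (hQ : 0 < Q) (he : 0 < e) (hx : 0 < x) (hy : 0 < y) :
    (Q * x ^ (-e) > P * y ^ (-e)) ↔ (P/Q) ^ (1/e) * x < y := by
  have hxe : 0 < x ^ e := Real.rpow_pos_of_pos hx e
  have hye : 0 < y ^ e := Real.rpow_pos_of_pos hy e
  have hPQ : 0 < P / Q := div_pos hP hQ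
  rw [gt_iff_lt, Real.rpow_neg hx.le, Real.rpow_neg hy.le, ← div_eq_mul_inv, ← div_eq_mul_inv,
    div_lt_div_iff₀ hye hxe,
    ← Real.rpow_lt_rpow_iff (by positivity) hy.le he,
    Real.mul_rpow (Real.rpow_nonneg hPQ.le _) hx.le,
    ← Real.rpow_mul hPQ.le, one_div_mul_cancel he.ne', Real.rpow_one,
    div_mul_eq_mul_div, div_lt_iff₀ hQ, mul_comm (y ^ e) Q]

set_option maxHeartbeats 2000000 in
theorem stmt2
    {Ω : Type*} [MeasureSpace Ω] [IsProbabilityMeasure (ℙ : Measure Ω)]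
    (Zm Zs Zv : Ω → ℝ)
    (hZmMeas : Measurable Zm) (hZsMeas : Measurable Zs) (hZvMeas : Measurable Zv)
    (hIndep : iIndepFun ![Zm, Zs, Zv] ℙ)
    (lm ls lv hm hs hv Pm Ps Pv eta : ℝ)
    (hlm : 0 < lm) (hls : 0 < ls) (hlv : 0 < lv)
    (hhm : 0 < hm) (hhs : 0 < hs) (hhv : 0 < hv)
    (hPm : 0 < Pm) (hPs : 0 < Ps) (hPv : 0 < Pv)
    (heta : 2 < eta)
    (Psm Pms Pmv Pvm Psv Pvs : ℝ)
    (hPsm : Psm = (Ps / Pm) ^ (2 / eta)) (hPms : Pms = (Pm / Ps) ^ (2 / eta))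
    (hPmv : Pmv = (Pm / Pv) ^ (2 / eta)) (hPvm : Pvm = (Pv / Pm) ^ (2 / eta))
    (hPsv : Psv = (Ps / Pv) ^ (2 / eta)) (hPvs : Pvs = (Pv / Ps) ^ (2 / eta))
    (hZmCCDF : ∀ x : ℝ, ℙ {ω | Zm ω > x} =
      if x < hm then 1 else ENNReal.ofReal (Real.exp (-(π * lm * (x ^ 2 - hm ^ 2)))))
    (hZsCCDF : ∀ x : ℝ, ℙ {ω | Zs ω > x} =
      if x < hs then 1 else ENNReal.ofReal (Real.exp (-(π * ls * (x ^ 2 - hs ^ 2)))))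
    (hZvCCDF : ∀ x : ℝ, ℙ {ω | Zv ω > x} =
      if x < hv then 1 else ENNReal.ofReal (Real.exp (-(π * lv * (x ^ 2 - hv ^ 2)))))
    (hsm : hs < hm) (hmv : hm < hv)
    (hsm2 : hs ^ 2 ≤ Psm * hm ^ 2) (hmv2 : hm ^ 2 ≤ Pmv * hv ^ 2) :
    (ℙ {ω | Pv * Zv ω ^ (-eta) > Pm * Zm ω ^ (-eta) ∧ Pv * Zv ω ^ (-eta) > Ps * Zs ω ^ (-eta)}).toReal =
      lv / (lv + lm * Pmv + ls * Psv) *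
      Real.exp (-(π * hv ^ 2 * (lv + lm * Pmv + ls * Psv)) +
        π * (lm * hm ^ 2 + ls * hs ^ 2 + lv * hv ^ 2)) := by
  have hπ : (0:ℝ) < π := Real.pi_pos
  have he : 0 < eta := by linarith
  have hQmv : 0 < Pm / Pv := div_pos hPm hPv
  have hQsv : 0 < Ps / Pv := div_pos hPs hPv
  set a : ℝ := (Pm / Pv) ^ (1/eta) with ha_def
  set b : ℝ := (Ps / Pv) ^ (1/eta) with hb_def
  have ha_pos : 0 < a := Real.rpow_pos_of_pos hQmv _
  have hb_pos : 0 < b := Real.rpow_pos_of_pos hQsv _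
  have haa : a * a = Pmv := by
    rw [ha_def, ← Real.rpow_add hQmv, hPmv]
    congr 1
    ring
  have hbb : b * b = Psv := by
    rw [hb_def, ← Real.rpow_add hQsv, hPsv]
    congr 1
    ring
  have hPmv_pos : 0 < Pmv := by rw [← haa]; positivity
  have hPsv_pos : 0 < Psv := by rw [← hbb]; positivity
  have hPsm_pos : 0 < Psm := hPsm ▸ Real.rpow_pos_of_pos (div_pos hPs hPm) _
  have hsplit : Psv = Psm * Pmv := by
    rw [hPsv, hPsm, hPmv, ← Real.mul_rpow (div_pos hPs hPm).le hQmv.le]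
    congr 1
    field_simp
  -- geometric bounds
  have hahv : hm ≤ a * hv := by
    have h2 : hm^2 ≤ (a*hv)^2 := by
      have hh : (a*hv)^2 = Pmv * hv^2 := by rw [mul_pow, sq a, haa]
      rw [hh]; exact hmv2
    calc hm = Real.sqrt (hm^2) := (Real.sqrt_sq hhm.le).symm
      _ ≤ Real.sqrt ((a*hv)^2) := Real.sqrt_le_sqrt h2
      _ = a * hv := Real.sqrt_sq (by positivity)
  have hbhv : hs ≤ b * hv := by
    have h2 : hs^2 ≤ (b*hv)^2 := by
      have hh : (b*hv)^2 = Psv * hv^2 := by rw [mul_pow, sq b, hbb]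
      rw [hh, hsplit]
      calc hs^2 ≤ Psm * hm^2 := hsm2
        _ ≤ Psm * (Pmv * hv^2) := by nlinarith
        _ = Psm * Pmv * hv^2 := by ring
    calc hs = Real.sqrt (hs^2) := (Real.sqrt_sq hhs.le).symm
      _ ≤ Real.sqrt ((b*hv)^2) := Real.sqrt_le_sqrt h2
      _ = b * hv := Real.sqrt_sq (by positivity)
  -- a.s. positivity
  have hprob : ∀ (Z : Ω → ℝ) (h0 : ℝ), Measurable Z → 0 < h0 →
      (∀ x, x < h0 → ℙ {ω | Z ω > x} = 1) → ∀ᵐ ω ∂(ℙ : Measure Ω), 0 < Z ω := by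
    intro Z h0 hZ hh hccdf
    have h1 : ℙ {ω | Z ω > h0/2} = 1 := hccdf _ (by linarith)
    have h2 : ℙ {ω | Z ω > h0/2}ᶜ = 0 := by
      rw [measure_compl (measurableSet_lt measurable_const hZ) (measure_ne_top _ _), h1,
        measure_univ, tsub_self]
    refine ae_iff.2 (measure_mono_null ?_ h2)
    intro ω hω
    simp only [Set.mem_compl_iff, Set.mem_setOf_eq, not_lt] at *
    linarith
  have hZm_pos : ∀ᵐ ω ∂(ℙ : Measure Ω), 0 < Zm ω :=
    hprob Zm hm hZmMeas hhm (fun x hx => by rw [hZmCCDF x, if_pos hx])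
  have hZs_pos : ∀ᵐ ω ∂(ℙ : Measure Ω), 0 < Zs ω :=
    hprob Zs hs hZsMeas hhs (fun x hx => by rw [hZsCCDF x, if_pos hx])
  have hZv_pos : ∀ᵐ ω ∂(ℙ : Measure Ω), 0 < Zv ω :=
    hprob Zv hv hZvMeas hhv (fun x hx => by rw [hZvCCDF x, if_pos hx])
  -- event rewrite
  have hEv : ℙ {ω | Pv * Zv ω ^ (-eta) > Pm * Zm ω ^ (-eta) ∧ Pv * Zv ω ^ (-eta) > Ps * Zs ω ^ (-eta)}
      = ℙ {ω | a * Zv ω < Zm ω ∧ b * Zv ω < Zs ω} := by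
    apply measure_congr
    rw [Filter.eventuallyEq_set]
    filter_upwards [hZm_pos, hZs_pos, hZv_pos] with ω h1 h2 h3
    show (_ ∧ _) ↔ (_ ∧ _)
    rw [key_iff Pm Pv eta _ _ hPm hPv he h3 h1, key_iff Ps Pv eta _ _ hPs hPv he h3 h2]
  -- independence
  have hmeasW : Measurable fun ω => (Zm ω, Zs ω) := hZmMeas.prodMk hZsMeas
  have hmeasT : Measurable fun ω => (Zv ω, (Zm ω, Zs ω)) := hZvMeas.prodMk hmeasW
  have hfm : ∀ i : Fin 3, Measurable (![Zm, Zs, Zv] i) := by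
    intro i
    fin_cases i
    · exact hZmMeas
    · exact hZsMeas
    · exact hZvMeas
  have hWv : IndepFun (fun ω => (Zm ω, Zs ω)) Zv ℙ := by
    have h := hIndep.indepFun_prodMk hfm 0 1 2 (by decide) (by decide)
    simpa using h
  have hms : IndepFun Zm Zs ℙ := by
    have h := hIndep.indepFun (show (0:Fin 3) ≠ 1 by decide)
    simpa using h
  have hmapT : (ℙ : Measure Ω).map (fun ω => (Zv ω, (Zm ω, Zs ω)))
      = ((ℙ : Measure Ω).map Zv).prod ((ℙ : Measure Ω).map fun ω => (Zm ω, Zs ω)) :=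
    (indepFun_iff_map_prod_eq_prod_map_map hZvMeas.aemeasurable hmeasW.aemeasurable).1 hWv.symm
  have hmapW : (ℙ : Measure Ω).map (fun ω => (Zm ω, Zs ω))
      = ((ℙ : Measure Ω).map Zm).prod ((ℙ : Measure Ω).map Zs) :=
    (indepFun_iff_map_prod_eq_prod_map_map hZmMeas.aemeasurable hZsMeas.aemeasurable).1 hms
  haveI : IsProbabilityMeasure ((ℙ : Measure Ω).map Zv) :=
    Measure.isProbabilityMeasure_map hZvMeas.aemeasurable
  haveI : IsProbabilityMeasure ((ℙ : Measure Ω).map fun ω => (Zm ω, Zs ω)) :=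
    Measure.isProbabilityMeasure_map hmeasW.aemeasurable
  set U : Set (ℝ × (ℝ × ℝ)) := {p | a * p.1 < p.2.1 ∧ b * p.1 < p.2.2} with hU_def
  have hU : MeasurableSet U := by
    have h1 : MeasurableSet {p : ℝ × (ℝ × ℝ) | a * p.1 < p.2.1} :=
      measurableSet_lt (measurable_fst.const_mul a) (measurable_fst.comp measurable_snd)
    have h2 : MeasurableSet {p : ℝ × (ℝ × ℝ) | b * p.1 < p.2.2} :=
      measurableSet_lt (measurable_fst.const_mul b) (measurable_snd.comp measurable_snd)
    rw [hU_def, Set.setOf_and]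
    exact h1.inter h2
  have hstep : ℙ {ω | a * Zv ω < Zm ω ∧ b * Zv ω < Zs ω}
      = ∫⁻ z, (ℙ {ω | Zm ω > a*z}) * (ℙ {ω | Zs ω > b*z}) ∂((ℙ : Measure Ω).map Zv) := by
    have hpre : {ω | a * Zv ω < Zm ω ∧ b * Zv ω < Zs ω}
        = (fun ω => (Zv ω, (Zm ω, Zs ω))) ⁻¹' U := rfl
    rw [hpre, ← Measure.map_apply hmeasT hU, hmapT, Measure.prod_apply hU]
    refine lintegral_congr fun z => ?_
    have hpz : Prod.mk z ⁻¹' U = Set.Ioi (a*z) ×ˢ Set.Ioi (b*z) := by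
      ext q
      simp [hU_def, Set.mem_Ioi]
    rw [hpz, hmapW, Measure.prod_prod, Measure.map_apply hZmMeas measurableSet_Ioi,
      Measure.map_apply hZsMeas measurableSet_Ioi]
    rfl
  -- density identification
  set g : ℝ → ℝ := fun t => 2*(π*lv)*t * Real.exp (-(π*lv*t^2 - π*lv*hv^2)) with hg_def
  have hg_cont : Continuous g := by fun_prop
  set f : ℝ → ℝ≥0∞ := fun t => Set.indicator (Set.Ici hv) (fun t => ENNReal.ofReal (g t)) t
    with hf_def
  have hf_meas : Measurable f :=
    (ENNReal.measurable_ofReal.comp hg_cont.measurable).indicator measurableSet_Ici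
  have hνv : (ℙ : Measure Ω).map Zv = volume.withDensity f := by
    refine Measure.ext_of_Iic _ _ (fun x => ?_)
    have hIoi : ((ℙ : Measure Ω).map Zv) (Set.Ioi x)
        = if x < hv then 1 else ENNReal.ofReal (Real.exp (-(π * lv * (x ^ 2 - hv ^ 2)))) := by
      rw [Measure.map_apply hZvMeas measurableSet_Ioi]; exact hZvCCDF x
    have hIic : ((ℙ : Measure Ω).map Zv) (Set.Iic x)
        = 1 - (if x < hv then 1 else ENNReal.ofReal (Real.exp (-(π * lv * (x ^ 2 - hv ^ 2))))) := by
      rw [← Set.compl_Ioi, measure_compl measurableSet_Ioi (measure_ne_top _ _), measure_univ,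
        hIoi]
    rw [hIic, withDensity_apply _ measurableSet_Iic, hf_def]
    rw [lintegral_indicator measurableSet_Ici, Measure.restrict_restrict measurableSet_Ici,
      Set.Ici_inter_Iic]
    by_cases hx : x < hv
    · rw [if_pos hx, Set.Icc_eq_empty (by intro h; linarith [h]), Measure.restrict_empty,
        lintegral_zero_measure, tsub_self]
    · rw [if_neg hx]
      push_neg at hx
      have hnn : 0 ≤ᵐ[volume.restrict (Set.Icc hv x)] g := by
        refine (ae_restrict_iff' measurableSet_Icc).2 (ae_of_all _ fun t ht => ?_)
        have ht0 : 0 ≤ t := hhv.le.trans ht.1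
        rw [hg_def]
        positivity
      rw [← ofReal_integral_eq_lintegral_ofReal (hg_cont.integrableOn_Icc) hnn]
      have hint : ∫ t in Set.Icc hv x, g t = 1 - Real.exp (-(π * lv * (x ^ 2 - hv ^ 2))) := by
        rw [MeasureTheory.integral_Icc_eq_integral_Ioc, ← intervalIntegral.integral_of_le hx]
        have hd : ∀ t ∈ Set.uIcc hv x, HasDerivAt
            (fun z => -((2*(π*lv))/(2*(π*lv))) * Real.exp (-((π*lv)*z^2 - π*lv*hv^2)))
            (g t) t := fun t _ => by
          rw [hg_def]
          exact auxDeriv (2*(π*lv)) (π*lv) (π*lv*hv^2) (by positivity) t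
        rw [intervalIntegral.integral_eq_sub_of_hasDerivAt hd
          (hg_cont.intervalIntegrable hv x)]
        have hc : (2*(π*lv))/(2*(π*lv)) = 1 := div_self (by positivity)
        rw [hc]
        have e1 : -((π*lv)*x^2 - π*lv*hv^2) = -(π * lv * (x ^ 2 - hv ^ 2)) := by ring
        have e2 : -((π*lv)*hv^2 - π*lv*hv^2) = 0 := by ring
        rw [e1, e2, Real.exp_zero]
        ring
      rw [hint, ENNReal.ofReal_sub 1 (Real.exp_nonneg _), ENNReal.ofReal_one]
  -- the final computation
  set C : ℝ := π*lv + π*lm*Pmv + π*ls*Psv with hC_def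
  set D : ℝ := π*lv*hv^2 + π*lm*hm^2 + π*ls*hs^2 with hD_def
  have hC_pos : 0 < C := by rw [hC_def]; positivity
  set F : ℝ → ℝ≥0∞ := fun z =>
    (if a*z < hm then 1 else ENNReal.ofReal (Real.exp (-(π * lm * ((a*z) ^ 2 - hm ^ 2))))) *
    (if b*z < hs then 1 else ENNReal.ofReal (Real.exp (-(π * ls * ((b*z) ^ 2 - hs ^ 2)))))
    with hF_def
  have hF_meas : Measurable F := by
    apply Measurable.mul
    · exact Measurable.ite (measurableSet_lt (measurable_id.const_mul a) measurable_const)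
        measurable_const
        (ENNReal.measurable_ofReal.comp (by fun_prop))
    · exact Measurable.ite (measurableSet_lt (measurable_id.const_mul b) measurable_const)
        measurable_const
        (ENNReal.measurable_ofReal.comp (by fun_prop))
  have hmain : ℙ {ω | a * Zv ω < Zm ω ∧ b * Zv ω < Zs ω}
      = ENNReal.ofReal ((2*(π*lv))/(2*C) * Real.exp (-(C*hv^2 - D))) := by
    rw [hstep]
    have hFr : ∀ z, (ℙ {ω | Zm ω > a*z}) * (ℙ {ω | Zs ω > b*z}) = F z := fun z => by
      rw [hZmCCDF, hZsCCDF, hF_def]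
    rw [lintegral_congr hFr, hνv,
      lintegral_withDensity_eq_lintegral_mul volume hf_meas hF_meas]
    have hind : (f * F) = Set.indicator (Set.Ici hv) (fun z => ENNReal.ofReal (g z) * F z) := by
      funext z
      by_cases hz : z ∈ Set.Ici hv <;>
        simp [hf_def, Set.indicator_of_mem, Set.indicator_of_notMem, hz]
    rw [hind, lintegral_indicator measurableSet_Ici,
      ← Measure.restrict_congr_set Ioi_ae_eq_Ici]
    have hptw : ∀ z ∈ Set.Ioi hv, ENNReal.ofReal (g z) * F z
        = ENNReal.ofReal (2*(π*lv)*z * Real.exp (-(C*z^2 - D))) := by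
      intro z hz
      have hzv : hv < z := hz
      have hz0 : 0 < z := hhv.trans hzv
      have hm_le : ¬ (a*z < hm) := by
        push_neg
        exact hahv.trans (mul_le_mul_of_nonneg_left hzv.le ha_pos.le)
      have hs_le : ¬ (b*z < hs) := by
        push_neg
        exact hbhv.trans (mul_le_mul_of_nonneg_left hzv.le hb_pos.le)
      rw [hF_def]
      simp only [if_neg hm_le, if_neg hs_le]
      rw [← ENNReal.ofReal_mul (Real.exp_nonneg _), ← Real.exp_add,
        hg_def, ← ENNReal.ofReal_mul (by positivity)]
      congr 1
      rw [mul_assoc, ← Real.exp_add]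
      congr 2
      have h1 : (a*z)^2 = Pmv * z^2 := by rw [mul_pow, sq a, haa]
      have h2 : (b*z)^2 = Psv * z^2 := by rw [mul_pow, sq b, hbb]
      rw [h1, h2, hC_def, hD_def]
      ring
    rw [setLIntegral_congr_fun measurableSet_Ioi hptw]
    rw [← ofReal_integral_eq_lintegral_ofReal
      (auxIntegrableOn (2*(π*lv)) C D hv (by positivity) hC_pos hhv.le)
      ((ae_restrict_iff' measurableSet_Ioi).2 (ae_of_all _ fun t ht => by
        have ht0 : 0 ≤ t := hhv.le.trans (Set.mem_Ioi.mp ht).le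
        positivity))]
    rw [auxIntegral (2*(π*lv)) C D hv (by positivity) hC_pos hhv.le]
  rw [hEv, hmain, ENNReal.toReal_ofReal (by
    have h2C : (0:ℝ) ≤ 2*C := by linarith
    exact mul_nonneg (div_nonneg (by positivity) h2C) (Real.exp_nonneg _))]
  have hSig : 0 < lv + lm * Pmv + ls * Psv := by positivity
  have hcoef : (2*(π*lv))/(2*C) = lv / (lv + lm * Pmv + ls * Psv) := by
    rw [hC_def]
    rw [div_eq_div_iff (by positivity) hSig.ne']
    ring
  have hexp : -(C*hv^2 - D) = -(π * hv ^ 2 * (lv + lm * Pmv + ls * Psv)) +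
      π * (lm * hm ^ 2 + ls * hs ^ 2 + lv * hv ^ 2) := by
    rw [hC_def, hD_def]; ring
  rw [hcoef, hexp]
end

section
/- Under the three-tier association model, define the horizontal serving distance X_s = √(Z_s² − h_s²), L_s1 = √(P_sm·h_m² − h_s²), and L_s2 = √(P_sv·h_v² − h_s²). Then for every x ≥ 0, the joint probability P[X_s ≤ x and the user associates with the small-cell tier] equals ∫₀^x g_s(t) dt, where g_s(t) = 2π·λ_s·t·exp(−π·λ_s·t²) for 0 ≤ t ≤ L_s1; g_s(t) = 2π·λ_s·t·exp(−π·t²·(λ_s + λ_m·P_ms) − π·λ_m·(h_s²·P_ms − h_m²)) for L_s1 < t ≤ L_s2; and g_s(t) = 2π·λ_s·t·exp(−π·t²·(λ_s + λ_m·P_ms + λ_v·P_vs) − π·λ_m·(h_s²·P_ms − h_m²) − π·λ_v·(h_s²·P_vs − h_v²)) for t > L_s2. (Dividing g_s on each range by the corresponding partial association probability A_s1, A_s2, A_s3 yields the paper's conditional PDF f_{X_s}.) -/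
open MeasureTheory ProbabilityTheory Real
open scoped ENNReal

private lemma ftc_aux (l h a b : ℝ) :
    ∫ s in a..b, 2 * π * l * s * Real.exp (-(π * l * (s ^ 2 - h ^ 2))) =
      Real.exp (-(π * l * (a ^ 2 - h ^ 2))) - Real.exp (-(π * l * (b ^ 2 - h ^ 2))) := by
  have hderiv : ∀ s ∈ Set.uIcc a b,
      HasDerivAt (fun s => -Real.exp (-(π * l * (s ^ 2 - h ^ 2))))
        (2 * π * l * s * Real.exp (-(π * l * (s ^ 2 - h ^ 2)))) s := by
    intro s _
    have h1 : HasDerivAt (fun s : ℝ => -(π * l * (s ^ 2 - h ^ 2))) (-(π * l * (2 * s))) s := by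
      have := (((hasDerivAt_pow 2 s).sub_const (h ^ 2)).const_mul (π * l)).neg
      simpa [Pi.neg_def] using this
    have h2 : HasDerivAt (fun s => -Real.exp (-(π * l * (s ^ 2 - h ^ 2))))
        (-(Real.exp (-(π * l * (s ^ 2 - h ^ 2))) * -(π * l * (2 * s)))) s := h1.exp.neg
    convert h2 using 1
    ring
  have hcont : Continuous fun s : ℝ => 2 * π * l * s * Real.exp (-(π * l * (s ^ 2 - h ^ 2))) := by
    continuity
  rw [intervalIntegral.integral_eq_sub_of_hasDerivAt hderiv (hcont.intervalIntegrable a b)]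
  ring

private lemma if_ccdf_eq_max (l h c : ℝ) (hh : 0 < h) (hc : 0 ≤ c) :
    (if c < h then (1 : ℝ≥0∞) else ENNReal.ofReal (Real.exp (-(π * l * (c ^ 2 - h ^ 2))))) =
      ENNReal.ofReal (Real.exp (-(π * l * (max (c ^ 2) (h ^ 2) - h ^ 2)))) := by
  by_cases hch : c < h
  · rw [if_pos hch, max_eq_right (by nlinarith), sub_self, mul_zero, neg_zero, Real.exp_zero,
      ENNReal.ofReal_one]
  · push_neg at hch
    rw [if_neg (not_lt.mpr hch), max_eq_left (by nlinarith)]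

private lemma law_withDensity {Ω : Type*} [MeasureSpace Ω] [IsProbabilityMeasure (ℙ : Measure Ω)]
    (Z : Ω → ℝ) (hZ : Measurable Z) (l h : ℝ) (hl : 0 < l) (hh : 0 < h)
    (hccdf : ∀ x : ℝ, ℙ {ω | Z ω > x} =
      if x < h then 1 else ENNReal.ofReal (Real.exp (-(π * l * (x ^ 2 - h ^ 2))))) :
    Measure.map Z ℙ = volume.withDensity (Set.indicator (Set.Ici h)
      (fun s => ENNReal.ofReal (2 * π * l * s * Real.exp (-(π * l * (s ^ 2 - h ^ 2)))))) := by
  haveI := Measure.isProbabilityMeasure_map (μ := ℙ) hZ.aemeasurable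
  refine MeasureTheory.Measure.ext_of_Iic _ _ (fun a => ?_)
  rw [Measure.map_apply hZ measurableSet_Iic, withDensity_apply _ measurableSet_Iic]
  have hcompl : Z ⁻¹' Set.Iic a = {ω | Z ω > a}ᶜ := by ext ω; simp [not_lt]
  have hmeas : MeasurableSet {ω | Z ω > a} := hZ measurableSet_Ioi
  rw [hcompl, measure_compl hmeas (measure_ne_top _ _), measure_univ, hccdf a,
    lintegral_indicator measurableSet_Ici _, Measure.restrict_restrict measurableSet_Ici,
    Set.Ici_inter_Iic]
  by_cases hah : a < h
  · rw [if_pos hah, Set.Icc_eq_empty (not_le.mpr hah), Measure.restrict_empty,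
      lintegral_zero_measure, tsub_self]
  · push_neg at hah
    rw [if_neg (not_lt.mpr hah),
      setLIntegral_congr (Filter.EventuallyEq.symm Ioc_ae_eq_Icc)]
    have hcont : Continuous fun s : ℝ => 2 * π * l * s * Real.exp (-(π * l * (s ^ 2 - h ^ 2))) := by
      continuity
    have hint : IntegrableOn (fun s : ℝ => 2 * π * l * s * Real.exp (-(π * l * (s ^ 2 - h ^ 2))))
        (Set.Ioc h a) := hcont.integrableOn_Ioc
    have hnn : 0 ≤ᵐ[volume.restrict (Set.Ioc h a)]
        fun s : ℝ => 2 * π * l * s * Real.exp (-(π * l * (s ^ 2 - h ^ 2))) := by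
      refine (ae_restrict_iff' measurableSet_Ioc).2 (Filter.Eventually.of_forall fun s hs => ?_)
      have hs0 : 0 < s := lt_trans hh hs.1
      have h1 : (0:ℝ) ≤ 2 * π * l * s := by positivity
      exact mul_nonneg h1 (Real.exp_nonneg _)
    rw [← MeasureTheory.ofReal_integral_eq_lintegral_ofReal hint hnn,
      ← intervalIntegral.integral_of_le hah, ftc_aux, sub_self, mul_zero, neg_zero, Real.exp_zero,
      ENNReal.ofReal_sub _ (Real.exp_nonneg _), ENNReal.ofReal_one]


private lemma mul_bound1 {P Q a b : ℝ} (hP : 0 < P) (hPQ : P * Q = 1) (h : a ≤ Q * b) :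
    P * a ≤ b :=
  calc P * a ≤ P * (Q * b) := mul_le_mul_of_nonneg_left h hP.le
    _ = (P * Q) * b := by ring
    _ = b := by rw [hPQ, one_mul]

private lemma mul_bound2 {P Q a b : ℝ} (hP : 0 < P) (hPQ : P * Q = 1) (h : Q * b < a) :
    b < P * a :=
  calc b = (P * Q) * b := by rw [hPQ, one_mul]
    _ = P * (Q * b) := by ring
    _ < P * a := mul_lt_mul_of_pos_left h hP

set_option maxHeartbeats 1600000 in
theorem stmt5
    {Ω : Type*} [MeasureSpace Ω] [IsProbabilityMeasure (ℙ : Measure Ω)]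
    (Zm Zs Zv : Ω → ℝ)
    (hZmMeas : Measurable Zm) (hZsMeas : Measurable Zs) (hZvMeas : Measurable Zv)
    (hIndep : iIndepFun ![Zm, Zs, Zv] ℙ)
    (lm ls lv hm hs hv Pm Ps Pv eta : ℝ)
    (hlm : 0 < lm) (hls : 0 < ls) (hlv : 0 < lv)
    (hhm : 0 < hm) (hhs : 0 < hs) (hhv : 0 < hv)
    (hPm : 0 < Pm) (hPs : 0 < Ps) (hPv : 0 < Pv)
    (heta : 2 < eta)
    (Psm Pms Pmv Pvm Psv Pvs : ℝ)
    (hPsm : Psm = (Ps / Pm) ^ (2 / eta)) (hPms : Pms = (Pm / Ps) ^ (2 / eta))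
    (hPmv : Pmv = (Pm / Pv) ^ (2 / eta)) (hPvm : Pvm = (Pv / Pm) ^ (2 / eta))
    (hPsv : Psv = (Ps / Pv) ^ (2 / eta)) (hPvs : Pvs = (Pv / Ps) ^ (2 / eta))
    (hZmCCDF : ∀ x : ℝ, ℙ {ω | Zm ω > x} =
      if x < hm then 1 else ENNReal.ofReal (Real.exp (-(π * lm * (x ^ 2 - hm ^ 2)))))
    (hZsCCDF : ∀ x : ℝ, ℙ {ω | Zs ω > x} =
      if x < hs then 1 else ENNReal.ofReal (Real.exp (-(π * ls * (x ^ 2 - hs ^ 2)))))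
    (hZvCCDF : ∀ x : ℝ, ℙ {ω | Zv ω > x} =
      if x < hv then 1 else ENNReal.ofReal (Real.exp (-(π * lv * (x ^ 2 - hv ^ 2)))))
    (hsm : hs < hm) (hmv : hm < hv)
    (hsm2 : hs ^ 2 ≤ Psm * hm ^ 2) (hmv2 : hm ^ 2 ≤ Pmv * hv ^ 2)
    (x : ℝ) (hx : 0 ≤ x)
    (g : ℝ → ℝ)
    (hg : ∀ t : ℝ, g t =
      if t ≤ Real.sqrt (Psm * hm ^ 2 - hs ^ 2) then
        2 * π * ls * t * Real.exp (-(π * ls * t ^ 2))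
      else if t ≤ Real.sqrt (Psv * hv ^ 2 - hs ^ 2) then
        2 * π * ls * t * Real.exp (-(π * t ^ 2 * (ls + lm * Pms)) - π * lm * (hs ^ 2 * Pms - hm ^ 2))
      else
        2 * π * ls * t * Real.exp (-(π * t ^ 2 * (ls + lm * Pms + lv * Pvs)) -
          π * lm * (hs ^ 2 * Pms - hm ^ 2) - π * lv * (hs ^ 2 * Pvs - hv ^ 2))) :
    (ℙ ({ω | Real.sqrt (Zs ω ^ 2 - hs ^ 2) ≤ x} ∩ {ω | Ps * Zs ω ^ (-eta) > Pm * Zm ω ^ (-eta) ∧ Ps * Zs ω ^ (-eta) > Pv * Zv ω ^ (-eta)})).toReal =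
      ∫ t in (0:ℝ)..x, g t := by
  have hπ : (0:ℝ) < π := Real.pi_pos
  have heta0 : (0:ℝ) < eta := by linarith
  have hPms0 : 0 < Pms := by rw [hPms]; exact Real.rpow_pos_of_pos (div_pos hPm hPs) _
  have hPsm0 : 0 < Psm := by rw [hPsm]; exact Real.rpow_pos_of_pos (div_pos hPs hPm) _
  have hPvs0 : 0 < Pvs := by rw [hPvs]; exact Real.rpow_pos_of_pos (div_pos hPv hPs) _
  have hPsv0 : 0 < Psv := by rw [hPsv]; exact Real.rpow_pos_of_pos (div_pos hPs hPv) _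
  have hPmv0 : 0 < Pmv := by rw [hPmv]; exact Real.rpow_pos_of_pos (div_pos hPm hPv) _
  have hPmsPsm : Pms * Psm = 1 := by
    rw [hPms, hPsm, ← Real.mul_rpow (div_pos hPm hPs).le (div_pos hPs hPm).le,
      show Pm / Ps * (Ps / Pm) = 1 by field_simp, Real.one_rpow]
  have hPvsPsv : Pvs * Psv = 1 := by
    rw [hPvs, hPsv, ← Real.mul_rpow (div_pos hPv hPs).le (div_pos hPs hPv).le,
      show Pv / Ps * (Ps / Pv) = 1 by field_simp, Real.one_rpow]
  have hPsv_eq : Psv = Psm * Pmv := by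
    rw [hPsv, hPsm, hPmv, ← Real.mul_rpow (div_pos hPs hPm).le (div_pos hPm hPv).le]
    congr 1
    field_simp
  set am := Real.sqrt Pms with ham
  set av := Real.sqrt Pvs with hav
  have ham2 : am ^ 2 = Pms := Real.sq_sqrt hPms0.le
  have hav2 : av ^ 2 = Pvs := Real.sq_sqrt hPvs0.le
  have ham0 : 0 < am := Real.sqrt_pos.2 hPms0
  have hav0 : 0 < av := Real.sqrt_pos.2 hPvs0
  set B := Real.sqrt (x ^ 2 + hs ^ 2) with hBdef
  have hBpos : 0 < B := Real.sqrt_pos.2 (by positivity)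
  have hB2 : B ^ 2 = x ^ 2 + hs ^ 2 := Real.sq_sqrt (by positivity)
  have hhsB : hs ≤ B := by
    calc hs = Real.sqrt (hs ^ 2) := (Real.sqrt_sq hhs.le).symm
      _ ≤ B := Real.sqrt_le_sqrt (by linarith [sq_nonneg x])
  -- almost everywhere positivity
  have haepos : ∀ᵐ ω ∂(ℙ : Measure Ω), 0 < Zm ω ∧ 0 < Zs ω ∧ 0 < Zv ω := by
    have hgen : ∀ (Z : Ω → ℝ) (h : ℝ), 0 < h → Measurable Z →
        (ℙ {ω | Z ω > h / 2} = 1) → ∀ᵐ ω ∂(ℙ : Measure Ω), 0 < Z ω := by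
      intro Z h hh hZ hfull
      have h2 : ∀ᵐ ω ∂(ℙ : Measure Ω), Z ω > h / 2 := by
        rw [ae_iff]
        have hset : {ω | ¬ Z ω > h / 2} = {ω | Z ω > h / 2}ᶜ := rfl
        have hms : MeasurableSet {ω | Z ω > h / 2} := hZ measurableSet_Ioi
        rw [hset, measure_compl hms (measure_ne_top _ _), hfull, measure_univ, tsub_self]
      filter_upwards [h2] with ω hω
      linarith
    have hm1 := hgen Zm hm hhm hZmMeas (by rw [hZmCCDF]; exact if_pos (by linarith))
    have hs1 := hgen Zs hs hhs hZsMeas (by rw [hZsCCDF]; exact if_pos (by linarith))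
    have hv1 := hgen Zv hv hhv hZvMeas (by rw [hZvCCDF]; exact if_pos (by linarith))
    filter_upwards [hm1, hs1, hv1] with ω h1 h2 h3
    exact ⟨h1, h2, h3⟩
  -- the pointwise association condition
  have hcond : ∀ (P1 P2 lam : ℝ), 0 < P1 → 0 < P2 →
      lam = Real.sqrt ((P2 / P1) ^ (2 / eta)) →
      ∀ s m : ℝ, 0 < s → 0 < m → (P1 * s ^ (-eta) > P2 * m ^ (-eta) ↔ lam * s < m) := by
    intro P1 P2 lam hP1 hP2 hlam s m hs0 hm0
    have hratio : (0:ℝ) < P2 / P1 := div_pos hP2 hP1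
    have hse : (0:ℝ) < s ^ eta := Real.rpow_pos_of_pos hs0 _
    have hme : (0:ℝ) < m ^ eta := Real.rpow_pos_of_pos hm0 _
    have hlam0 : 0 ≤ lam := hlam ▸ Real.sqrt_nonneg _
    have hlam' : lam = (P2 / P1) ^ (1 / eta) := by
      rw [hlam, Real.sqrt_eq_rpow, ← Real.rpow_mul hratio.le]
      congr 1
      ring
    have hlameta : lam ^ eta = P2 / P1 := by
      rw [hlam', ← Real.rpow_mul hratio.le, one_div, inv_mul_cancel₀ heta0.ne', Real.rpow_one]
    have key1 : P2 * m ^ (-eta) < P1 * s ^ (-eta) ↔ P2 * s ^ eta < P1 * m ^ eta := by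
      rw [Real.rpow_neg hs0.le, Real.rpow_neg hm0.le, ← div_eq_mul_inv, ← div_eq_mul_inv,
        div_lt_div_iff₀ hme hse]
    have key2 : lam * s < m ↔ P2 * s ^ eta < P1 * m ^ eta := by
      rw [← Real.rpow_lt_rpow_iff (by positivity : (0:ℝ) ≤ lam * s) hm0.le heta0,
        Real.mul_rpow hlam0 hs0.le, hlameta, div_mul_eq_mul_div, div_lt_iff₀ hP1,
        mul_comm (m ^ eta) P1]
    exact key1.trans key2.symm
  -- the target set, rewritten
  set T : Set (ℝ × ℝ × ℝ) := {p | p.1 ≤ B ∧ am * p.1 < p.2.1 ∧ av * p.1 < p.2.2} with hTdef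
  have hT : MeasurableSet T :=
    (measurableSet_le measurable_fst measurable_const).inter
      ((measurableSet_lt (measurable_fst.const_mul am) (measurable_fst.comp measurable_snd)).inter
        (measurableSet_lt (measurable_fst.const_mul av) (measurable_snd.comp measurable_snd)))
  have hEq : ℙ ({ω | Real.sqrt (Zs ω ^ 2 - hs ^ 2) ≤ x} ∩
      {ω | Ps * Zs ω ^ (-eta) > Pm * Zm ω ^ (-eta) ∧ Ps * Zs ω ^ (-eta) > Pv * Zv ω ^ (-eta)}) =
      ℙ ((fun ω => (Zs ω, (Zm ω, Zv ω))) ⁻¹' T) := by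
    apply measure_congr
    rw [Filter.eventuallyEq_set]
    filter_upwards [haepos] with ω hω
    obtain ⟨hZm0, hZs0, hZv0⟩ := hω
    simp only [Set.mem_inter_iff, Set.mem_setOf_eq, Set.mem_preimage, hTdef]
    have c1 : Real.sqrt (Zs ω ^ 2 - hs ^ 2) ≤ x ↔ Zs ω ≤ B := by
      rw [Real.sqrt_le_left hx, hBdef, Real.le_sqrt hZs0.le (by positivity)]
      constructor <;> intro h <;> linarith
    have c2 : Ps * Zs ω ^ (-eta) > Pm * Zm ω ^ (-eta) ↔ am * Zs ω < Zm ω :=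
      hcond Ps Pm am hPs hPm (by rw [ham, hPms]) (Zs ω) (Zm ω) hZs0 hZm0
    have c3 : Ps * Zs ω ^ (-eta) > Pv * Zv ω ^ (-eta) ↔ av * Zs ω < Zv ω :=
      hcond Ps Pv av hPs hPv (by rw [hav, hPvs]) (Zs ω) (Zv ω) hZs0 hZv0
    exact and_congr c1 (and_congr c2 c3)
  -- independence and laws
  set μm := Measure.map Zm ℙ with hμmdef
  set μs := Measure.map Zs ℙ with hμsdef
  set μv := Measure.map Zv ℙ with hμvdef
  haveI : IsProbabilityMeasure μm := Measure.isProbabilityMeasure_map (μ := ℙ) hZmMeas.aemeasurable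
  haveI : IsProbabilityMeasure μs := Measure.isProbabilityMeasure_map (μ := ℙ) hZsMeas.aemeasurable
  haveI : IsProbabilityMeasure μv := Measure.isProbabilityMeasure_map (μ := ℙ) hZvMeas.aemeasurable
  have hfmeas : ∀ i, Measurable (![Zm, Zs, Zv] i) := by
    intro i
    fin_cases i
    exacts [hZmMeas, hZsMeas, hZvMeas]
  have hindMV : IndepFun Zm Zv ℙ := hIndep.indepFun (show (0 : Fin 3) ≠ 2 by decide)
  have hindP : IndepFun (fun ω => (Zm ω, Zv ω)) Zs ℙ :=
    hIndep.indepFun_prodMk hfmeas 0 2 1 (by decide) (by decide)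
  have hMV : Measure.map (fun ω => (Zm ω, Zv ω)) ℙ = μm.prod μv :=
    (indepFun_iff_map_prod_eq_prod_map_map hZmMeas.aemeasurable hZvMeas.aemeasurable).mp hindMV
  have hfull : Measure.map (fun ω => (Zs ω, (Zm ω, Zv ω))) ℙ = μs.prod (μm.prod μv) := by
    rw [(indepFun_iff_map_prod_eq_prod_map_map hZsMeas.aemeasurable
      (hZmMeas.prodMk hZvMeas).aemeasurable).mp hindP.symm, hMV]
  have hmeaspair : Measurable fun ω => (Zs ω, (Zm ω, Zv ω)) :=
    hZsMeas.prodMk (hZmMeas.prodMk hZvMeas)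
  rw [hEq, ← Measure.map_apply hmeaspair hT, hfull, Measure.prod_apply hT]
  -- survival functions
  set Fm : ℝ → ℝ := fun s => Real.exp (-(π * lm * (max ((am * s) ^ 2) (hm ^ 2) - hm ^ 2)))
    with hFmdef
  set Fv : ℝ → ℝ := fun s => Real.exp (-(π * lv * (max ((av * s) ^ 2) (hv ^ 2) - hv ^ 2)))
    with hFvdef
  set dens : ℝ → ℝ := fun s => 2 * π * ls * s * Real.exp (-(π * ls * (s ^ 2 - hs ^ 2)))
    with hdensdef
  set H : ℝ → ℝ := fun s => dens s * (Fm s * Fv s) with hHdef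
  have hGm : ∀ c : ℝ, μm (Set.Ioi c) = ℙ {ω | Zm ω > c} := fun c =>
    Measure.map_apply hZmMeas measurableSet_Ioi
  have hGv : ∀ c : ℝ, μv (Set.Ioi c) = ℙ {ω | Zv ω > c} := fun c =>
    Measure.map_apply hZvMeas measurableSet_Ioi
  have hsurvm : ∀ s : ℝ, 0 < s → μm (Set.Ioi (am * s)) = ENNReal.ofReal (Fm s) := by
    intro s hs0
    rw [hGm, hZmCCDF, hFmdef]
    exact if_ccdf_eq_max lm hm (am * s) hhm (by positivity)
  have hsurvv : ∀ s : ℝ, 0 < s → μv (Set.Ioi (av * s)) = ENNReal.ofReal (Fv s) := by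
    intro s hs0
    rw [hGv, hZvCCDF, hFvdef]
    exact if_ccdf_eq_max lv hv (av * s) hhv (by positivity)
  -- slice the product
  have hslice : (∫⁻ s, (μm.prod μv) (Prod.mk s ⁻¹' T) ∂μs) =
      ∫⁻ s, Set.indicator (Set.Iic B)
        (fun s => μm (Set.Ioi (am * s)) * μv (Set.Ioi (av * s))) s ∂μs := by
    apply lintegral_congr
    intro s
    by_cases hsB : s ≤ B
    · have hpre : Prod.mk s ⁻¹' T = Set.Ioi (am * s) ×ˢ Set.Ioi (av * s) := by
        ext q
        simp only [Set.mem_preimage, hTdef, Set.mem_setOf_eq, Set.mem_prod, Set.mem_Ioi]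
        exact ⟨fun ⟨_, h2, h3⟩ => ⟨h2, h3⟩, fun ⟨h2, h3⟩ => ⟨hsB, h2, h3⟩⟩
      rw [hpre, Measure.prod_prod, Set.indicator_of_mem (show s ∈ Set.Iic B from hsB) _]
    · have hpre : Prod.mk s ⁻¹' T = ∅ := by
        ext q
        simp only [Set.mem_preimage, hTdef, Set.mem_setOf_eq, Set.mem_empty_iff_false, iff_false]
        exact fun ⟨h1, _, _⟩ => hsB h1
      rw [hpre, measure_empty, Set.indicator_of_notMem (show s ∉ Set.Iic B from hsB) _]
  rw [hslice, lintegral_indicator measurableSet_Iic _]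
  -- density of μs
  have hμs : μs = volume.withDensity (Set.indicator (Set.Ici hs)
      (fun s => ENNReal.ofReal (dens s))) := law_withDensity Zs hZsMeas ls hs hls hhs hZsCCDF
  have hGmeasm : Measurable fun s : ℝ => μm (Set.Ioi (am * s)) := by
    have : (fun s : ℝ => μm (Set.Ioi (am * s))) = fun s =>
        if am * s < hm then 1 else ENNReal.ofReal (Real.exp (-(π * lm * ((am * s) ^ 2 - hm ^ 2)))) := by
      funext s
      rw [hGm, hZmCCDF]
    rw [this]
    refine Measurable.ite (measurableSet_lt (measurable_id.const_mul am) measurable_const)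
      measurable_const ?_
    exact ENNReal.measurable_ofReal.comp (by fun_prop)
  have hGmeasv : Measurable fun s : ℝ => μv (Set.Ioi (av * s)) := by
    have : (fun s : ℝ => μv (Set.Ioi (av * s))) = fun s =>
        if av * s < hv then 1 else ENNReal.ofReal (Real.exp (-(π * lv * ((av * s) ^ 2 - hv ^ 2)))) := by
      funext s
      rw [hGv, hZvCCDF]
    rw [this]
    refine Measurable.ite (measurableSet_lt (measurable_id.const_mul av) measurable_const)
      measurable_const ?_
    exact ENNReal.measurable_ofReal.comp (by fun_prop)
  have hρmeas : Measurable (Set.indicator (Set.Ici hs) (fun s => ENNReal.ofReal (dens s))) := by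
    refine Measurable.indicator ?_ measurableSet_Ici
    exact ENNReal.measurable_ofReal.comp (by rw [hdensdef]; fun_prop)
  rw [hμs, MeasureTheory.restrict_withDensity measurableSet_Iic,
    lintegral_withDensity_eq_lintegral_mul _ hρmeas (g := fun s => μm (Set.Ioi (am * s)) * μv (Set.Ioi (av * s))) (hGmeasm.mul hGmeasv)]
  have hpull : (fun s => (Set.indicator (Set.Ici hs) (fun s => ENNReal.ofReal (dens s)) *
      fun s => μm (Set.Ioi (am * s)) * μv (Set.Ioi (av * s))) s) =
      fun s => Set.indicator (Set.Ici hs)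
        (fun s => ENNReal.ofReal (dens s) * (μm (Set.Ioi (am * s)) * μv (Set.Ioi (av * s)))) s := by
    funext s
    by_cases hsh : s ∈ Set.Ici hs
    · simp [Set.indicator_of_mem hsh]
    · simp [Set.indicator_of_notMem hsh]
  rw [hpull, lintegral_indicator measurableSet_Ici _, Measure.restrict_restrict measurableSet_Ici,
    Set.Ici_inter_Iic, setLIntegral_congr (Filter.EventuallyEq.symm Ioc_ae_eq_Icc)]
  have hHcont : Continuous H := by
    rw [hHdef, hdensdef, hFmdef, hFvdef]
    fun_prop
  have hcongr : ∀ s ∈ Set.Ioc hs B,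
      ENNReal.ofReal (dens s) * (μm (Set.Ioi (am * s)) * μv (Set.Ioi (av * s))) =
        ENNReal.ofReal (H s) := by
    intro s hsmem
    have hs0 : 0 < s := lt_trans hhs hsmem.1
    have hdnn : 0 ≤ dens s := by
      rw [hdensdef]
      have h1 : (0:ℝ) ≤ 2 * π * ls * s := by positivity
      exact mul_nonneg h1 (Real.exp_nonneg _)
    rw [hsurvm s hs0, hsurvv s hs0, hHdef,
      ← ENNReal.ofReal_mul (Real.exp_nonneg _), ← ENNReal.ofReal_mul hdnn]
  rw [setLIntegral_congr_fun measurableSet_Ioc hcongr]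
  have hint : IntegrableOn H (Set.Ioc hs B) := hHcont.integrableOn_Ioc
  have hHnn : ∀ s ∈ Set.Ioc hs B, 0 ≤ H s := by
    intro s hsmem
    have hs0 : 0 < s := lt_trans hhs hsmem.1
    rw [hHdef, hdensdef]
    have h1 : (0:ℝ) ≤ 2 * π * ls * s := by positivity
    exact mul_nonneg (mul_nonneg h1 (Real.exp_nonneg _))
      (mul_nonneg (Real.exp_nonneg _) (Real.exp_nonneg _))
  have hnn : 0 ≤ᵐ[volume.restrict (Set.Ioc hs B)] H :=
    (ae_restrict_iff' measurableSet_Ioc).2 (Filter.Eventually.of_forall hHnn)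
  rw [← MeasureTheory.ofReal_integral_eq_lintegral_ofReal hint hnn,
    ENNReal.toReal_ofReal (MeasureTheory.setIntegral_nonneg measurableSet_Ioc hHnn),
    ← intervalIntegral.integral_of_le hhsB]
  -- change of variables
  set φ : ℝ → ℝ := fun t => Real.sqrt (t ^ 2 + hs ^ 2) with hφdef
  set φ' : ℝ → ℝ := fun t => t / Real.sqrt (t ^ 2 + hs ^ 2) with hφ'def
  have hφpos : ∀ t : ℝ, 0 < t ^ 2 + hs ^ 2 := fun t => by positivity
  have hφderiv : ∀ t ∈ Set.uIcc 0 x, HasDerivAt φ (φ' t) t := by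
    intro t _
    have h1 : HasDerivAt (fun t : ℝ => t ^ 2 + hs ^ 2) (2 * t) t := by
      simpa using (hasDerivAt_pow 2 t).add_const (hs ^ 2)
    have h2 : HasDerivAt φ (1 / (2 * Real.sqrt (t ^ 2 + hs ^ 2)) * (2 * t)) t :=
      (Real.hasDerivAt_sqrt (hφpos t).ne').comp t h1
    convert h2 using 1
    rw [hφ'def]
    have hV : Real.sqrt (t ^ 2 + hs ^ 2) ≠ 0 := (Real.sqrt_pos.2 (hφpos t)).ne'
    field_simp
  have hφ'cont : ContinuousOn φ' (Set.uIcc 0 x) := by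
    apply Continuous.continuousOn
    refine Continuous.div continuous_id (Real.continuous_sqrt.comp (by continuity)) ?_
    exact fun t => (Real.sqrt_pos.2 (hφpos t)).ne'
  have hsub := intervalIntegral.integral_comp_smul_deriv hφderiv hφ'cont hHcont
  have hφ0 : φ 0 = hs := by
    rw [hφdef]
    simp only
    rw [show (0:ℝ) ^ 2 + hs ^ 2 = hs ^ 2 by ring, Real.sqrt_sq hhs.le]
  have hφx : φ x = B := by rw [hφdef, hBdef]
  rw [hφ0, hφx] at hsub
  rw [← hsub]
  -- pointwise identity with g
  apply intervalIntegral.integral_congr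
  intro t ht
  rw [Set.uIcc_of_le hx] at ht
  obtain ⟨ht0, htx⟩ := ht
  have hφt0 : 0 < φ t := Real.sqrt_pos.2 (hφpos t)
  have hφt2 : φ t ^ 2 = t ^ 2 + hs ^ 2 := Real.sq_sqrt (hφpos t).le
  have hamφ : (am * φ t) ^ 2 = Pms * (t ^ 2 + hs ^ 2) := by rw [mul_pow, ham2, hφt2]
  have havφ : (av * φ t) ^ 2 = Pvs * (t ^ 2 + hs ^ 2) := by rw [mul_pow, hav2, hφt2]
  have hdensφ : φ' t * dens (φ t) = 2 * π * ls * t * Real.exp (-(π * ls * t ^ 2)) := by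
    rw [hφ'def, hdensdef]
    simp only
    rw [hφt2]
    have : t ^ 2 + hs ^ 2 - hs ^ 2 = t ^ 2 := by ring
    rw [this]
    have hV : Real.sqrt (t ^ 2 + hs ^ 2) ≠ 0 := hφt0.ne'
    field_simp
    ring
  have hkey : φ' t • (H ∘ φ) t = 2 * π * ls * t * Real.exp (-(π * ls * t ^ 2)) *
      (Fm (φ t) * Fv (φ t)) := by
    rw [smul_eq_mul, Function.comp_apply, hHdef]
    simp only
    rw [← mul_assoc, hdensφ]
  have hL1nn : (0:ℝ) ≤ Psm * hm ^ 2 - hs ^ 2 := by linarith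
  have hPsmPsv : Psm * hm ^ 2 ≤ Psv * hv ^ 2 := by
    rw [hPsv_eq]
    calc Psm * hm ^ 2 ≤ Psm * (Pmv * hv ^ 2) := mul_le_mul_of_nonneg_left hmv2 hPsm0.le
      _ = Psm * Pmv * hv ^ 2 := by ring
  have hL2nn : (0:ℝ) ≤ Psv * hv ^ 2 - hs ^ 2 := by linarith
  show φ' t • (H ∘ φ) t = g t
  rw [hkey, hg t]
  by_cases h1 : t ≤ Real.sqrt (Psm * hm ^ 2 - hs ^ 2)
  · have ht2 : t ^ 2 ≤ Psm * hm ^ 2 - hs ^ 2 := (Real.le_sqrt ht0 hL1nn).1 h1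
    have hFm1 : Fm (φ t) = 1 := by
      rw [hFmdef]
      simp only
      rw [hamφ, max_eq_right (mul_bound1 hPms0 hPmsPsm (by linarith)), sub_self, mul_zero,
        neg_zero, Real.exp_zero]
    have hFv1 : Fv (φ t) = 1 := by
      rw [hFvdef]
      simp only
      rw [havφ, max_eq_right (mul_bound1 hPvs0 hPvsPsv (by linarith)), sub_self, mul_zero,
        neg_zero, Real.exp_zero]
    rw [if_pos h1, hFm1, hFv1]
    ring
  · push_neg at h1
    have htpos : 0 < t := lt_of_le_of_lt (Real.sqrt_nonneg _) h1
    have ht2 : Psm * hm ^ 2 - hs ^ 2 < t ^ 2 := (Real.sqrt_lt' htpos).1 h1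
    have hFm2 : Fm (φ t) = Real.exp (-(π * lm * (Pms * (t ^ 2 + hs ^ 2) - hm ^ 2))) := by
      rw [hFmdef]
      simp only
      rw [hamφ, max_eq_left (mul_bound2 hPms0 hPmsPsm (by linarith)).le]
    by_cases h2 : t ≤ Real.sqrt (Psv * hv ^ 2 - hs ^ 2)
    · have ht2' : t ^ 2 ≤ Psv * hv ^ 2 - hs ^ 2 := (Real.le_sqrt ht0 hL2nn).1 h2
      have hFv1 : Fv (φ t) = 1 := by
        rw [hFvdef]
        simp only
        rw [havφ, max_eq_right (mul_bound1 hPvs0 hPvsPsv (by linarith)), sub_self, mul_zero,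
          neg_zero, Real.exp_zero]
      rw [if_neg (not_le.mpr h1), if_pos h2, hFm2, hFv1, mul_one]
      rw [show 2 * π * ls * t * Real.exp (-(π * ls * t ^ 2)) *
          Real.exp (-(π * lm * (Pms * (t ^ 2 + hs ^ 2) - hm ^ 2))) =
          2 * π * ls * t * Real.exp (-(π * t ^ 2 * (ls + lm * Pms)) -
            π * lm * (hs ^ 2 * Pms - hm ^ 2)) from by
        rw [show -(π * t ^ 2 * (ls + lm * Pms)) - π * lm * (hs ^ 2 * Pms - hm ^ 2) =
          (-(π * ls * t ^ 2)) + (-(π * lm * (Pms * (t ^ 2 + hs ^ 2) - hm ^ 2))) from by ring,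
          Real.exp_add]
        ring]
    · push_neg at h2
      have ht2' : Psv * hv ^ 2 - hs ^ 2 < t ^ 2 := (Real.sqrt_lt' htpos).1 h2
      have hFv2 : Fv (φ t) = Real.exp (-(π * lv * (Pvs * (t ^ 2 + hs ^ 2) - hv ^ 2))) := by
        rw [hFvdef]
        simp only
        rw [havφ, max_eq_left (mul_bound2 hPvs0 hPvsPsv (by linarith)).le]
      rw [if_neg (not_le.mpr h1), if_neg (not_le.mpr h2), hFm2, hFv2]
      rw [show 2 * π * ls * t * Real.exp (-(π * ls * t ^ 2)) *
          (Real.exp (-(π * lm * (Pms * (t ^ 2 + hs ^ 2) - hm ^ 2))) *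
            Real.exp (-(π * lv * (Pvs * (t ^ 2 + hs ^ 2) - hv ^ 2)))) =
          2 * π * ls * t * Real.exp (-(π * t ^ 2 * (ls + lm * Pms + lv * Pvs)) -
            π * lm * (hs ^ 2 * Pms - hm ^ 2) - π * lv * (hs ^ 2 * Pvs - hv ^ 2)) from by
        rw [show -(π * t ^ 2 * (ls + lm * Pms + lv * Pvs)) -
            π * lm * (hs ^ 2 * Pms - hm ^ 2) - π * lv * (hs ^ 2 * Pvs - hv ^ 2) =
          (-(π * ls * t ^ 2)) + ((-(π * lm * (Pms * (t ^ 2 + hs ^ 2) - hm ^ 2))) +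
            (-(π * lv * (Pvs * (t ^ 2 + hs ^ 2) - hv ^ 2)))) from by ring,
          Real.exp_add, Real.exp_add]
        ring]
end

section
/- Under the three-tier association model, conditional on the event that the user associates with the UAV tier, the horizontal serving distance X_v = √(Z_v² − h_v²) satisfies P[X_v > x | UAV association] = exp(−π·(λ_v + λ_m·P_mv + λ_s·P_sv)·x²) for every x ≥ 0. -/
open MeasureTheory ProbabilityTheory Real Set Filter
open scoped ENNReal Topology

lemma aux_integral (a K L : ℝ) (ha : 0 ≤ a) (hL : 0 < L) (hK : 0 ≤ K) :
    IntegrableOn (fun z => K * z * Real.exp (-(L * z ^ 2))) (Set.Ioi a) volume ∧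
    ∫ z in Set.Ioi a, K * z * Real.exp (-(L * z ^ 2)) =
      K / (2 * L) * Real.exp (-(L * a ^ 2)) := by
  have hg : ∀ z : ℝ, HasDerivAt (fun z => -(K / (2 * L)) * Real.exp (-(L * z ^ 2)))
      (K * z * Real.exp (-(L * z ^ 2))) z := by
    intro z
    have h1 : HasDerivAt (fun z : ℝ => -(L * z ^ 2)) (-(2 * L * z)) z := by
      have := ((hasDerivAt_pow 2 z).const_mul L).neg
      refine this.congr_deriv ?_
      push_cast
      ring
    have h2 := (h1.exp).const_mul (-(K / (2 * L)))
    refine h2.congr_deriv ?_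
    field_simp
  have htend : Tendsto (fun z : ℝ => -(K / (2 * L)) * Real.exp (-(L * z ^ 2))) atTop (𝓝 0) := by
    have h1 : Tendsto (fun z : ℝ => L * z ^ 2) atTop atTop :=
      (tendsto_pow_atTop two_ne_zero).const_mul_atTop hL
    have h2 : Tendsto (fun z : ℝ => -(L * z ^ 2)) atTop atBot :=
      tendsto_neg_atTop_atBot.comp h1
    have h3 := Real.tendsto_exp_atBot.comp h2
    have h4 := h3.const_mul (-(K / (2 * L)))
    simpa using h4
  have hpos : ∀ z ∈ Set.Ioi a, 0 ≤ K * z * Real.exp (-(L * z ^ 2)) := by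
    intro z hz
    have hz0 : (0:ℝ) < z := lt_of_le_of_lt ha hz
    positivity
  refine ⟨integrableOn_Ioi_deriv_of_nonneg' (fun z _ => hg z) hpos htend, ?_⟩
  rw [integral_Ioi_of_hasDerivAt_of_nonneg' (fun z _ => hg z) hpos htend]
  ring


lemma aux_density {Ω : Type*} [MeasureSpace Ω] [IsProbabilityMeasure (ℙ : Measure Ω)]
    (Z : Ω → ℝ) (hZ : Measurable Z) (l h : ℝ) (hl : 0 < l) (hh : 0 < h)
    (hccdf : ∀ x : ℝ, ℙ {ω | Z ω > x} =
      if x < h then 1 else ENNReal.ofReal (Real.exp (-(π * l * (x ^ 2 - h ^ 2))))) :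
    Measure.map Z ℙ = volume.withDensity
      (fun z => ENNReal.ofReal ((Set.Ioi h).indicator
        (fun z => 2 * π * l * z * Real.exp (-(π * l * (z ^ 2 - h ^ 2)))) z)) := by
  have : IsProbabilityMeasure (Measure.map Z ℙ) := Measure.isProbabilityMeasure_map hZ.aemeasurable
  set f : ℝ → ℝ := fun z => 2 * π * l * z * Real.exp (-(π * l * (z ^ 2 - h ^ 2))) with hf
  have hfc : Continuous f := by fun_prop
  refine Measure.ext_of_Iic (Measure.map Z ℙ) _ (fun a => ?_)
  -- left side
  have hmeasset : MeasurableSet {ω | Z ω > a} := measurableSet_lt measurable_const hZ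
  have hleft : (Measure.map Z ℙ) (Iic a) = 1 - ℙ {ω | Z ω > a} := by
    rw [Measure.map_apply hZ measurableSet_Iic]
    have : Z ⁻¹' Iic a = {ω | Z ω > a}ᶜ := by ext ω; simp [not_lt]
    rw [this, measure_compl hmeasset (measure_ne_top _ _), measure_univ]
  -- right side
  have hright : (volume.withDensity
      (fun z => ENNReal.ofReal ((Set.Ioi h).indicator f z))) (Iic a) =
      ∫⁻ z in Iic a, ENNReal.ofReal ((Set.Ioi h).indicator f z) := by
    rw [withDensity_apply _ measurableSet_Iic]
  rw [hleft, hright, hccdf a]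
  by_cases hha : a < h
  · rw [if_pos hha]
    have : ∀ z ∈ Iic a, ENNReal.ofReal ((Set.Ioi h).indicator f z) = 0 := by
      intro z hz
      rw [Set.indicator_of_notMem (by simp only [mem_Ioi, not_lt]; exact le_of_lt (lt_of_le_of_lt hz hha))]
      simp
    rw [setLIntegral_congr_fun measurableSet_Iic this]
    simp
  · push_neg at hha
    rw [if_neg (not_lt.2 hha)]
    -- compute the integral
    have hint : Integrable ((Set.Ioi h).indicator f) (volume.restrict (Iic a)) := by
      rw [integrable_indicator_iff measurableSet_Ioi]
      unfold IntegrableOn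
      rw [Measure.restrict_restrict measurableSet_Ioi, Set.Ioi_inter_Iic]
      exact hfc.integrableOn_Ioc
    have hnn : 0 ≤ᵐ[volume.restrict (Iic a)] ((Set.Ioi h).indicator f) := by
      refine ae_of_all _ (fun z => ?_)
      by_cases hz : z ∈ Set.Ioi h
      · rw [Set.indicator_of_mem hz]
        have : (0:ℝ) < z := lt_trans hh hz
        positivity
      · rw [Set.indicator_of_notMem hz]
        simp
    rw [← ofReal_integral_eq_lintegral_ofReal hint hnn]
    have hval : ∫ z in Iic a, (Set.Ioi h).indicator f z =
        1 - Real.exp (-(π * l * (a ^ 2 - h ^ 2))) := by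
      rw [setIntegral_indicator measurableSet_Ioi]
      have hset : Iic a ∩ Ioi h = Ioc h a := by rw [Set.inter_comm, Set.Ioi_inter_Iic]
      rw [hset, ← intervalIntegral.integral_of_le hha]
      have hderiv : ∀ z ∈ Set.uIcc h a,
          HasDerivAt (fun z => -Real.exp (-(π * l * (z ^ 2 - h ^ 2)))) (f z) z := by
        intro z _
        have h1 : HasDerivAt (fun z : ℝ => -(π * l * (z ^ 2 - h ^ 2))) (-(2 * π * l * z)) z := by
          have h0 : HasDerivAt (fun z : ℝ => z ^ 2 - h ^ 2) (2 * z) z := by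
            simpa using (hasDerivAt_pow 2 z).sub_const (h ^ 2)
          have := (h0.const_mul (π * l)).neg
          refine this.congr_deriv ?_
          ring
        have := (h1.exp).neg
        refine this.congr_deriv ?_
        simp only [hf]
        ring
      have hii : IntervalIntegrable f volume h a := hfc.intervalIntegrable h a
      rw [intervalIntegral.integral_eq_sub_of_hasDerivAt hderiv hii]
      simp [sub_self]
      ring
    rw [hval, ← ENNReal.ofReal_one, ← ENNReal.ofReal_sub _ (Real.exp_nonneg _)]


lemma aux_assoc (P Q z m η : ℝ) (hP : 0 < P) (hQ : 0 < Q) (hz : 0 < z) (hm : 0 < m)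
    (hη : 0 < η) : Q * z ^ (-η) > P * m ^ (-η) ↔ (P / Q) ^ (1 / η) * z < m := by
  have hzη : (0:ℝ) < z ^ η := Real.rpow_pos_of_pos hz η
  have hmη : (0:ℝ) < m ^ η := Real.rpow_pos_of_pos hm η
  have hcz : (0:ℝ) < (P / Q) ^ (1 / η) * z := by positivity
  have key : ((P / Q) ^ (1 / η) * z) ^ η = (P / Q) * z ^ η := by
    rw [Real.mul_rpow (by positivity) hz.le, ← Real.rpow_mul (by positivity),
      one_div_mul_cancel hη.ne', Real.rpow_one]
  rw [gt_iff_lt, Real.rpow_neg hz.le, Real.rpow_neg hm.le, ← div_eq_mul_inv, ← div_eq_mul_inv,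
    div_lt_div_iff₀ hmη hzη, ← Real.rpow_lt_rpow_iff hcz.le hm.le hη, key,
    div_mul_eq_mul_div, div_lt_iff₀ hQ]
  constructor <;> intro h <;> linarith


lemma aux_prob {Ω : Type*} [MeasureSpace Ω] [IsProbabilityMeasure (ℙ : Measure Ω)]
    (Zm Zs Zv : Ω → ℝ)
    (hZmMeas : Measurable Zm) (hZsMeas : Measurable Zs) (hZvMeas : Measurable Zv)
    (hIndep : iIndepFun ![Zm, Zs, Zv] ℙ)
    (lm ls lv hm hs hv c d : ℝ)
    (hlm : 0 < lm) (hls : 0 < ls) (hlv : 0 < lv)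
    (hhm : 0 < hm) (hhs : 0 < hs) (hhv : 0 < hv)
    (hc : 0 < c) (hd : 0 < d)
    (hZmCCDF : ∀ x : ℝ, ℙ {ω | Zm ω > x} =
      if x < hm then 1 else ENNReal.ofReal (Real.exp (-(π * lm * (x ^ 2 - hm ^ 2)))))
    (hZsCCDF : ∀ x : ℝ, ℙ {ω | Zs ω > x} =
      if x < hs then 1 else ENNReal.ofReal (Real.exp (-(π * ls * (x ^ 2 - hs ^ 2)))))
    (hZvCCDF : ∀ x : ℝ, ℙ {ω | Zv ω > x} =
      if x < hv then 1 else ENNReal.ofReal (Real.exp (-(π * lv * (x ^ 2 - hv ^ 2)))))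
    (hchm : hm ≤ c * hv) (hdhs : hs ≤ d * hv)
    (t : ℝ) (ht : hv ≤ t) :
    ℙ {ω | t < Zv ω ∧ c * Zv ω < Zm ω ∧ d * Zv ω < Zs ω} =
      ENNReal.ofReal (lv / (lv + lm * c ^ 2 + ls * d ^ 2) *
        Real.exp (π * (lv * hv ^ 2 + lm * hm ^ 2 + ls * hs ^ 2)
          - π * (lv + lm * c ^ 2 + ls * d ^ 2) * t ^ 2)) := by
  have hπ : (0:ℝ) < π := Real.pi_pos
  have hL : (0:ℝ) < lv + lm * c ^ 2 + ls * d ^ 2 := by positivity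
  have ipv : IsProbabilityMeasure (Measure.map Zv ℙ) :=
    Measure.isProbabilityMeasure_map hZvMeas.aemeasurable
  have ipms : IsProbabilityMeasure (Measure.map (fun ω => (Zm ω, Zs ω)) ℙ) :=
    Measure.isProbabilityMeasure_map (hZmMeas.prodMk hZsMeas).aemeasurable
  have hmeasvec : ∀ i, Measurable (![Zm, Zs, Zv] i) := by
    intro i
    fin_cases i <;> simpa
  have h1 : IndepFun Zm Zs ℙ := by
    have := hIndep.indepFun (show (0 : Fin 3) ≠ 1 by decide)
    simpa using this
  have hpair : IndepFun Zv (fun ω => (Zm ω, Zs ω)) ℙ := by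
    have := (hIndep.indepFun_prodMk hmeasvec 0 1 2 (by decide) (by decide)).symm
    simpa using this
  have hmapms : Measure.map (fun ω => (Zm ω, Zs ω)) ℙ
      = (Measure.map Zm ℙ).prod (Measure.map Zs ℙ) :=
    (indepFun_iff_map_prod_eq_prod_map_map hZmMeas.aemeasurable hZsMeas.aemeasurable).1 h1
  have hmapv : Measure.map (fun ω => (Zv ω, (Zm ω, Zs ω))) ℙ
      = (Measure.map Zv ℙ).prod (Measure.map (fun ω => (Zm ω, Zs ω)) ℙ) :=
    (indepFun_iff_map_prod_eq_prod_map_map hZvMeas.aemeasurable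
      (hZmMeas.prodMk hZsMeas).aemeasurable).1 hpair
  set S : Set (ℝ × ℝ × ℝ) := {p | t < p.1 ∧ c * p.1 < p.2.1 ∧ d * p.1 < p.2.2} with hSdef
  have hS : MeasurableSet S :=
    (measurableSet_lt measurable_const measurable_fst).inter
      ((measurableSet_lt (measurable_fst.const_mul c) measurable_snd.fst).inter
        (measurableSet_lt (measurable_fst.const_mul d) measurable_snd.snd))
  have step1 : ℙ {ω | t < Zv ω ∧ c * Zv ω < Zm ω ∧ d * Zv ω < Zs ω}
      = ((Measure.map Zv ℙ).prod (Measure.map (fun ω => (Zm ω, Zs ω)) ℙ)) S := by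
    rw [← hmapv, Measure.map_apply (hZvMeas.prodMk (hZmMeas.prodMk hZsMeas)) hS]
    rfl
  set G : ℝ → ℝ≥0∞ := (Set.Ioi t).indicator fun z =>
    ENNReal.ofReal (Real.exp (-(π * lm * ((c*z) ^ 2 - hm ^ 2)))) *
      ENNReal.ofReal (Real.exp (-(π * ls * ((d*z) ^ 2 - hs ^ 2)))) with hGdef
  have hGeq : ∀ z, (Measure.map (fun ω => (Zm ω, Zs ω)) ℙ) (Prod.mk z ⁻¹' S) = G z := by
    intro z
    by_cases hz : t < z
    · have hzv : hv < z := lt_of_le_of_lt ht hz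
      have hpre : Prod.mk z ⁻¹' S = Set.Ioi (c*z) ×ˢ Set.Ioi (d*z) := by
        ext p
        simp only [Set.mem_preimage, hSdef, Set.mem_setOf_eq, Set.mem_prod, Set.mem_Ioi]
        tauto
      have hcm : ¬ (c * z < hm) := by
        push_neg
        calc hm ≤ c * hv := hchm
        _ ≤ c * z := by nlinarith
      have hds : ¬ (d * z < hs) := by
        push_neg
        calc hs ≤ d * hv := hdhs
        _ ≤ d * z := by nlinarith
      rw [hpre, hmapms, Measure.prod_prod,
        Measure.map_apply hZmMeas measurableSet_Ioi,
        Measure.map_apply hZsMeas measurableSet_Ioi]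
      have e1 : Zm ⁻¹' Set.Ioi (c*z) = {ω | Zm ω > c*z} := rfl
      have e2 : Zs ⁻¹' Set.Ioi (d*z) = {ω | Zs ω > d*z} := rfl
      rw [e1, e2, hZmCCDF, hZsCCDF, if_neg hcm, if_neg hds, hGdef,
        Set.indicator_of_mem (Set.mem_Ioi.2 hz)]
    · have hpre : Prod.mk z ⁻¹' S = ∅ := by
        ext p
        simp [hSdef, hz]
      rw [hpre, measure_empty, hGdef, Set.indicator_of_notMem (by simpa using hz)]
  have step2 : ℙ {ω | t < Zv ω ∧ c * Zv ω < Zm ω ∧ d * Zv ω < Zs ω}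
      = ∫⁻ z, G z ∂(Measure.map Zv ℙ) := by
    rw [step1, Measure.prod_apply hS]
    exact lintegral_congr hGeq
  -- rewrite the law of Zv
  set fv : ℝ → ℝ≥0∞ := fun z => ENNReal.ofReal ((Set.Ioi hv).indicator
    (fun z => 2 * π * lv * z * Real.exp (-(π * lv * (z ^ 2 - hv ^ 2)))) z) with hfvdef
  have hfvmeas : Measurable fv := by
    apply Measurable.ennreal_ofReal
    exact Measurable.indicator (by fun_prop) measurableSet_Ioi
  have hGmeas : Measurable G := by
    apply Measurable.indicator _ measurableSet_Ioi
    exact (Measurable.ennreal_ofReal (by fun_prop)).mul (Measurable.ennreal_ofReal (by fun_prop))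
  have step3 : ∫⁻ z, G z ∂(Measure.map Zv ℙ) = ∫⁻ z, (fv * G) z := by
    rw [aux_density Zv hZvMeas lv hv hlv hhv hZvCCDF,
      lintegral_withDensity_eq_lintegral_mul volume hfvmeas hGmeas]
  set H : ℝ → ℝ := (Set.Ioi t).indicator fun z =>
    (2 * π * lv * Real.exp (π * (lv * hv ^ 2 + lm * hm ^ 2 + ls * hs ^ 2))) * z *
      Real.exp (-(π * (lv + lm * c ^ 2 + ls * d ^ 2) * z ^ 2)) with hHdef
  have hpoint : ∀ z, (fv * G) z = ENNReal.ofReal (H z) := by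
    intro z
    simp only [Pi.mul_apply]
    by_cases hz : z ∈ Set.Ioi t
    · have hzv : z ∈ Set.Ioi hv := Set.mem_Ioi.2 (lt_of_le_of_lt ht hz)
      have hz0 : (0:ℝ) < z := lt_trans hhv hzv
      simp only [hHdef, hGdef, hfvdef, Set.indicator_of_mem hz, Set.indicator_of_mem hzv]
      rw [← ENNReal.ofReal_mul (Real.exp_nonneg _), ← ENNReal.ofReal_mul (by positivity)]
      congr 1
      rw [show (2 * π * lv * z * Real.exp (-(π * lv * (z ^ 2 - hv ^ 2)))) *
          (Real.exp (-(π * lm * ((c*z) ^ 2 - hm ^ 2))) *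
            Real.exp (-(π * ls * ((d*z) ^ 2 - hs ^ 2))))
          = (2 * π * lv * z) * Real.exp ((-(π * lv * (z ^ 2 - hv ^ 2)))
            + ((-(π * lm * ((c*z) ^ 2 - hm ^ 2))) + (-(π * ls * ((d*z) ^ 2 - hs ^ 2)))))
          from by rw [Real.exp_add, Real.exp_add]; ring]
      rw [show (-(π * lv * (z ^ 2 - hv ^ 2)))
            + ((-(π * lm * ((c*z) ^ 2 - hm ^ 2))) + (-(π * ls * ((d*z) ^ 2 - hs ^ 2))))
          = π * (lv * hv ^ 2 + lm * hm ^ 2 + ls * hs ^ 2)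
            + (-(π * (lv + lm * c ^ 2 + ls * d ^ 2) * z ^ 2)) from by ring]
      rw [Real.exp_add]
      ring
    · rw [hHdef, hGdef, Set.indicator_of_notMem hz, Set.indicator_of_notMem hz,
        mul_zero, ENNReal.ofReal_zero]
  have ht0 : (0:ℝ) ≤ t := le_trans hhv.le ht
  have haux := aux_integral t
    (2 * π * lv * Real.exp (π * (lv * hv ^ 2 + lm * hm ^ 2 + ls * hs ^ 2)))
    (π * (lv + lm * c ^ 2 + ls * d ^ 2)) ht0 (by positivity) (by positivity)
  have hHint : Integrable H volume := by
    rw [hHdef, integrable_indicator_iff measurableSet_Ioi]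
    exact haux.1
  have hHnn : 0 ≤ᵐ[volume] H := by
    refine ae_of_all _ (fun z => ?_)
    simp only [Pi.zero_apply, hHdef]
    by_cases hz : z ∈ Set.Ioi t
    · rw [Set.indicator_of_mem hz]
      have hz0 : (0:ℝ) < z := lt_of_le_of_lt ht0 hz
      positivity
    · rw [Set.indicator_of_notMem hz]
  have step4 : ∫⁻ z, (fv * G) z = ENNReal.ofReal (∫ z, H z) := by
    rw [lintegral_congr hpoint, ← ofReal_integral_eq_lintegral_ofReal hHint hHnn]
  have step5 : ∫ z, H z = (2 * π * lv * Real.exp (π * (lv * hv ^ 2 + lm * hm ^ 2 + ls * hs ^ 2)))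
      / (2 * (π * (lv + lm * c ^ 2 + ls * d ^ 2)))
        * Real.exp (-(π * (lv + lm * c ^ 2 + ls * d ^ 2) * t ^ 2)) := by
    rw [hHdef, integral_indicator measurableSet_Ioi]
    exact haux.2
  rw [step2, step3, step4, step5]
  congr 1
  rw [show π * (lv * hv ^ 2 + lm * hm ^ 2 + ls * hs ^ 2)
      - π * (lv + lm * c ^ 2 + ls * d ^ 2) * t ^ 2
      = π * (lv * hv ^ 2 + lm * hm ^ 2 + ls * hs ^ 2)
        + (-(π * (lv + lm * c ^ 2 + ls * d ^ 2) * t ^ 2)) from by ring, Real.exp_add]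
  field_simp


theorem stmt7
    {Ω : Type*} [MeasureSpace Ω] [IsProbabilityMeasure (ℙ : Measure Ω)]
    (Zm Zs Zv : Ω → ℝ)
    (hZmMeas : Measurable Zm) (hZsMeas : Measurable Zs) (hZvMeas : Measurable Zv)
    (hIndep : iIndepFun ![Zm, Zs, Zv] ℙ)
    (lm ls lv hm hs hv Pm Ps Pv eta : ℝ)
    (hlm : 0 < lm) (hls : 0 < ls) (hlv : 0 < lv)
    (hhm : 0 < hm) (hhs : 0 < hs) (hhv : 0 < hv)
    (hPm : 0 < Pm) (hPs : 0 < Ps) (hPv : 0 < Pv)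
    (heta : 2 < eta)
    (Psm Pms Pmv Pvm Psv Pvs : ℝ)
    (hPsm : Psm = (Ps / Pm) ^ (2 / eta)) (hPms : Pms = (Pm / Ps) ^ (2 / eta))
    (hPmv : Pmv = (Pm / Pv) ^ (2 / eta)) (hPvm : Pvm = (Pv / Pm) ^ (2 / eta))
    (hPsv : Psv = (Ps / Pv) ^ (2 / eta)) (hPvs : Pvs = (Pv / Ps) ^ (2 / eta))
    (hZmCCDF : ∀ x : ℝ, ℙ {ω | Zm ω > x} =
      if x < hm then 1 else ENNReal.ofReal (Real.exp (-(π * lm * (x ^ 2 - hm ^ 2)))))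
    (hZsCCDF : ∀ x : ℝ, ℙ {ω | Zs ω > x} =
      if x < hs then 1 else ENNReal.ofReal (Real.exp (-(π * ls * (x ^ 2 - hs ^ 2)))))
    (hZvCCDF : ∀ x : ℝ, ℙ {ω | Zv ω > x} =
      if x < hv then 1 else ENNReal.ofReal (Real.exp (-(π * lv * (x ^ 2 - hv ^ 2)))))
    (hsm : hs < hm) (hmv : hm < hv)
    (hsm2 : hs ^ 2 ≤ Psm * hm ^ 2) (hmv2 : hm ^ 2 ≤ Pmv * hv ^ 2)
    (x : ℝ) (hx : 0 ≤ x) :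
    ProbabilityTheory.cond ℙ {ω | Pv * Zv ω ^ (-eta) > Pm * Zm ω ^ (-eta) ∧ Pv * Zv ω ^ (-eta) > Ps * Zs ω ^ (-eta)}
      {ω | Real.sqrt (Zv ω ^ 2 - hv ^ 2) > x} =
      ENNReal.ofReal (Real.exp (-(π * (lv + lm * Pmv + ls * Psv) * x ^ 2))) := by
  have hπ : (0:ℝ) < π := Real.pi_pos
  have hη : (0:ℝ) < eta := by linarith
  set c : ℝ := (Pm / Pv) ^ (1 / eta) with hcdef
  set d : ℝ := (Ps / Pv) ^ (1 / eta) with hddef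
  have hc : 0 < c := Real.rpow_pos_of_pos (by positivity) _
  have hd : 0 < d := Real.rpow_pos_of_pos (by positivity) _
  have hc2 : c ^ 2 = Pmv := by
    rw [← Real.rpow_natCast c 2, hcdef, ← Real.rpow_mul (by positivity), hPmv]
    congr 1
    push_cast
    ring
  have hd2 : d ^ 2 = Psv := by
    rw [← Real.rpow_natCast d 2, hddef, ← Real.rpow_mul (by positivity), hPsv]
    congr 1
    push_cast
    ring
  have hPsmpos : 0 < Psm := by rw [hPsm]; positivity
  have hPmvpos : 0 < Pmv := by rw [hPmv]; positivity
  have hPsveq : Psv = Psm * Pmv := by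
    rw [hPsv, hPsm, hPmv, ← Real.mul_rpow (by positivity) (by positivity)]
    congr 1
    field_simp
  have hsv2 : hs ^ 2 ≤ Psv * hv ^ 2 := by
    calc hs ^ 2 ≤ Psm * hm ^ 2 := hsm2
    _ ≤ Psm * (Pmv * hv ^ 2) := mul_le_mul_of_nonneg_left hmv2 hPsmpos.le
    _ = Psv * hv ^ 2 := by rw [hPsveq]; ring
  have hchm : hm ≤ c * hv := by
    have h1 : hm ^ 2 ≤ (c * hv) ^ 2 := by rw [mul_pow, hc2]; linarith [hmv2]
    have h2 := Real.sqrt_le_sqrt h1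
    rwa [Real.sqrt_sq hhm.le, Real.sqrt_sq (mul_pos hc hhv).le] at h2
  have hdhs : hs ≤ d * hv := by
    have h1 : hs ^ 2 ≤ (d * hv) ^ 2 := by rw [mul_pow, hd2]; linarith [hsv2]
    have h2 := Real.sqrt_le_sqrt h1
    rwa [Real.sqrt_sq hhs.le, Real.sqrt_sq (mul_pos hd hhv).le] at h2
  -- a.e. facts
  have haeZm : ∀ᵐ ω ∂(ℙ : Measure Ω), hm < Zm ω := by
    have h1 : ℙ {ω | Zm ω > hm} = 1 := by rw [hZmCCDF hm]; simp
    have h2 : MeasurableSet {ω | Zm ω > hm} := measurableSet_lt measurable_const hZmMeas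
    have h3 := (prob_compl_eq_zero_iff h2).2 h1
    rw [ae_iff]
    simpa [Set.compl_setOf] using h3
  have haeZs : ∀ᵐ ω ∂(ℙ : Measure Ω), hs < Zs ω := by
    have h1 : ℙ {ω | Zs ω > hs} = 1 := by rw [hZsCCDF hs]; simp
    have h2 : MeasurableSet {ω | Zs ω > hs} := measurableSet_lt measurable_const hZsMeas
    have h3 := (prob_compl_eq_zero_iff h2).2 h1
    rw [ae_iff]
    simpa [Set.compl_setOf] using h3
  have haeZv : ∀ᵐ ω ∂(ℙ : Measure Ω), hv < Zv ω := by
    have h1 : ℙ {ω | Zv ω > hv} = 1 := by rw [hZvCCDF hv]; simp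
    have h2 : MeasurableSet {ω | Zv ω > hv} := measurableSet_lt measurable_const hZvMeas
    have h3 := (prob_compl_eq_zero_iff h2).2 h1
    rw [ae_iff]
    simpa [Set.compl_setOf] using h3
  -- threshold
  set t : ℝ := Real.sqrt (hv ^ 2 + x ^ 2) with htdef
  have ht : hv ≤ t := by
    rw [htdef, Real.le_sqrt hhv.le (by positivity)]
    linarith [sq_nonneg x]
  have ht2 : t ^ 2 = hv ^ 2 + x ^ 2 := Real.sq_sqrt (by positivity)
  -- pointwise equivalences
  have hmemA : ∀ ω, hm < Zm ω → hs < Zs ω → hv < Zv ω →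
      ((Pv * Zv ω ^ (-eta) > Pm * Zm ω ^ (-eta) ∧ Pv * Zv ω ^ (-eta) > Ps * Zs ω ^ (-eta))
        ↔ (c * Zv ω < Zm ω ∧ d * Zv ω < Zs ω)) := by
    intro ω h1 h2 h3
    rw [aux_assoc Pm Pv (Zv ω) (Zm ω) eta hPm hPv (lt_trans hhv h3) (lt_trans hhm h1) hη,
      aux_assoc Ps Pv (Zv ω) (Zs ω) eta hPs hPv (lt_trans hhv h3) (lt_trans hhs h2) hη]
  have hmemB : ∀ ω, hv < Zv ω →
      (x < Real.sqrt (Zv ω ^ 2 - hv ^ 2) ↔ t < Zv ω) := by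
    intro ω h3
    have hz0 : 0 < Zv ω := lt_trans hhv h3
    rw [Real.lt_sqrt hx, htdef, Real.sqrt_lt' hz0]
    constructor <;> intro h <;> linarith
  -- a.e. set equalities
  have hae1 : ({ω | Pv * Zv ω ^ (-eta) > Pm * Zm ω ^ (-eta) ∧ Pv * Zv ω ^ (-eta) > Ps * Zs ω ^ (-eta)}
      ∩ {ω | Real.sqrt (Zv ω ^ 2 - hv ^ 2) > x} : Set Ω)
      =ᵐ[ℙ] {ω | t < Zv ω ∧ c * Zv ω < Zm ω ∧ d * Zv ω < Zs ω} := by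
    rw [Filter.eventuallyEq_set]
    filter_upwards [haeZm, haeZs, haeZv] with ω h1 h2 h3
    simp only [Set.mem_inter_iff, Set.mem_setOf_eq, gt_iff_lt]
    rw [hmemA ω h1 h2 h3, hmemB ω h3]
    tauto
  have hae2 : ({ω | Pv * Zv ω ^ (-eta) > Pm * Zm ω ^ (-eta) ∧ Pv * Zv ω ^ (-eta) > Ps * Zs ω ^ (-eta)} : Set Ω)
      =ᵐ[ℙ] {ω | hv < Zv ω ∧ c * Zv ω < Zm ω ∧ d * Zv ω < Zs ω} := by
    rw [Filter.eventuallyEq_set]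
    filter_upwards [haeZm, haeZs, haeZv] with ω h1 h2 h3
    simp only [Set.mem_setOf_eq, gt_iff_lt]
    rw [hmemA ω h1 h2 h3]
    tauto
  -- measurability of the association event
  have hA_meas : MeasurableSet ({ω | Pv * Zv ω ^ (-eta) > Pm * Zm ω ^ (-eta)
      ∧ Pv * Zv ω ^ (-eta) > Ps * Zs ω ^ (-eta)} : Set Ω) := by
    have m1 : Measurable fun ω => Pm * Zm ω ^ (-eta) := by fun_prop
    have m2 : Measurable fun ω => Ps * Zs ω ^ (-eta) := by fun_prop
    have m3 : Measurable fun ω => Pv * Zv ω ^ (-eta) := by fun_prop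
    exact (measurableSet_lt m1 m3).inter (measurableSet_lt m2 m3)
  -- main computation
  rw [ProbabilityTheory.cond_apply hA_meas, measure_congr hae1, measure_congr hae2,
    aux_prob Zm Zs Zv hZmMeas hZsMeas hZvMeas hIndep lm ls lv hm hs hv c d
      hlm hls hlv hhm hhs hhv hc hd hZmCCDF hZsCCDF hZvCCDF hchm hdhs t ht,
    aux_prob Zm Zs Zv hZmMeas hZsMeas hZvMeas hIndep lm ls lv hm hs hv c d
      hlm hls hlv hhm hhs hhv hc hd hZmCCDF hZsCCDF hZvCCDF hchm hdhs hv le_rfl,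
    ← hc2, ← hd2]
  have hL : (0:ℝ) < lv + lm * c ^ 2 + ls * d ^ 2 := by positivity
  rw [← ENNReal.ofReal_inv_of_pos (by positivity), ← ENNReal.ofReal_mul (by positivity)]
  congr 1
  have e1 : Real.exp (π * (lv * hv ^ 2 + lm * hm ^ 2 + ls * hs ^ 2)
        - π * (lv + lm * c ^ 2 + ls * d ^ 2) * t ^ 2)
      = Real.exp (π * (lv * hv ^ 2 + lm * hm ^ 2 + ls * hs ^ 2)
          - π * (lv + lm * c ^ 2 + ls * d ^ 2) * hv ^ 2)
        * Real.exp (-(π * (lv + lm * c ^ 2 + ls * d ^ 2) * x ^ 2)) := by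
    rw [← Real.exp_add]
    congr 1
    rw [ht2]
    ring
  rw [e1, mul_inv]
  field_simp [Real.exp_ne_zero]
end

section
/- Let η > 2, T ≥ 0, λ > 0 and z > 0 be real numbers. Then the improper integral ∫_z^∞ (T·z^η / (r^η + T·z^η)) · 2π·λ·r dr converges and equals (2π·λ·T·z²/η) · ∫₀¹ u^(−2/η)/(1 + T·u) du; in particular, this quantity equals (2π·λ·T·z²/(η−2)) · ₂F₁(1, 1 − 2/η; 2 − 2/η; −T), where ₂F₁ is the Gauss hypergeometric function expressed through its Euler integral representation ₂F₁(1, 1−2/η; 2−2/η; −T) = (1 − 2/η)·∫₀¹ u^(−2/η)/(1 + T·u) du. -/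
open MeasureTheory Real
open scoped ENNReal

theorem stmt8
    (eta T lam z : ℝ)
    (heta : 2 < eta) (hT : 0 ≤ T) (hlam : 0 < lam) (hz : 0 < z) :
    MeasureTheory.IntegrableOn
        (fun r : ℝ => T * z ^ eta / (r ^ eta + T * z ^ eta) * (2 * π * lam * r))
        (Set.Ioi z) ∧
      (∫ r in Set.Ioi z, T * z ^ eta / (r ^ eta + T * z ^ eta) * (2 * π * lam * r)) =
        2 * π * lam * T * z ^ 2 / eta * ∫ u in (0:ℝ)..1, u ^ (-(2 / eta)) / (1 + T * u) ∧
      (∫ r in Set.Ioi z, T * z ^ eta / (r ^ eta + T * z ^ eta) * (2 * π * lam * r)) =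
        2 * π * lam * T * z ^ 2 / (eta - 2) *
          ((1 - 2 / eta) * ∫ u in (0:ℝ)..1, u ^ (-(2 / eta)) / (1 + T * u)) := by
  have heta0 : (0:ℝ) < eta := by linarith
  have hetane : eta ≠ 0 := ne_of_gt heta0
  set a : ℝ := -(1/eta) with ha
  have ha0 : a < 0 := by
    rw [ha]; simp [one_div]; positivity
  set g : ℝ → ℝ := fun u => z * u ^ a with hg
  set g' : ℝ → ℝ := fun u => z * (a * u ^ (a - 1)) with hg'
  set F : ℝ → ℝ := fun r => T * z ^ eta / (r ^ eta + T * z ^ eta) * (2 * π * lam * r) with hF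
  set C : ℝ := 2 * π * lam * T * z ^ 2 / eta with hC
  set h : ℝ → ℝ := fun u => u ^ (-(2 / eta)) / (1 + T * u) with hh
  -- derivative
  have hderiv : ∀ u ∈ Set.Ioo (0:ℝ) 1, HasDerivWithinAt g (g' u) (Set.Ioo (0:ℝ) 1) u := by
    intro u hu
    exact (((Real.hasDerivAt_rpow_const (p := a) (Or.inl (ne_of_gt hu.1))).const_mul
      z).hasDerivWithinAt)
  -- injectivity
  have hinj : Set.InjOn g (Set.Ioo (0:ℝ) 1) := by
    intro u hu v hv huv
    have h1 : u ^ a = v ^ a := by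
      have := huv
      simp only [hg] at this
      exact mul_left_cancel₀ (ne_of_gt hz) this
    exact Real.rpow_left_injOn (x := a) (ne_of_lt ha0)
      (le_of_lt hu.1) (le_of_lt hv.1) h1
  -- image
  have himg : g '' Set.Ioo (0:ℝ) 1 = Set.Ioi z := by
    ext r
    constructor
    · rintro ⟨u, hu, rfl⟩
      have h1 : 1 < u ^ a := by
        rw [Real.one_lt_rpow_iff_of_pos hu.1]
        exact Or.inr ⟨hu.2, ha0⟩
      simpa [hg] using (by nlinarith : z < z * u ^ a)
    · intro hr
      have hrz : z < r := hr
      have hr0 : (0:ℝ) < r := lt_trans hz hrz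
      refine ⟨(z / r) ^ eta, ⟨?_, ?_⟩, ?_⟩
      · positivity
      · apply Real.rpow_lt_one (by positivity) _ heta0
        rw [div_lt_one hr0]; exact hrz
      · simp only [hg]
        rw [← Real.rpow_mul (by positivity)]
        have : eta * a = -1 := by rw [ha, mul_neg, mul_one_div_cancel hetane]
        rw [this, Real.rpow_neg_one]
        field_simp
  -- pointwise identity
  have hpt : ∀ u ∈ Set.Ioo (0:ℝ) 1, |g' u| * F (g u) = C * h u := by
    intro u hu
    have hu0 : (0:ℝ) < u := hu.1
    have hv : (0:ℝ) < u ^ a := Real.rpow_pos_of_pos hu0 a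
    have hga : (g u) ^ eta = z ^ eta * u⁻¹ := by
      simp only [hg]
      rw [Real.mul_rpow (le_of_lt hz) (le_of_lt hv), ← Real.rpow_mul (le_of_lt hu0)]
      have : a * eta = -1 := by rw [ha, neg_mul, one_div_mul_cancel hetane]
      rw [this, Real.rpow_neg_one]
    have hua1 : u ^ (a - 1) = u ^ a / u := by
      rw [Real.rpow_sub hu0, Real.rpow_one]
    have hu2 : u ^ (-(2/eta)) = u ^ a * u ^ a := by
      rw [← Real.rpow_add hu0]
      congr 1
      rw [ha]; ring
    have habs : |g' u| = z * (1/eta) * (u ^ a / u) := by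
      simp only [hg', hua1]
      rw [abs_of_nonpos (le_of_lt (mul_neg_of_pos_of_neg hz
        (mul_neg_of_neg_of_pos ha0 (div_pos hv hu0))))]
      rw [ha]; ring
    have hz1 : (0:ℝ) < z ^ eta := Real.rpow_pos_of_pos hz eta
    have hden : (0:ℝ) < 1 + T * u := by nlinarith
    have hden2 : (0:ℝ) < z ^ eta * u⁻¹ + T * z ^ eta :=
      add_pos_of_pos_of_nonneg (mul_pos hz1 (inv_pos.mpr hu0)) (mul_nonneg hT hz1.le)
    have hu0' : u ≠ 0 := ne_of_gt hu0
    have hden' : (1 + T * u) ≠ 0 := ne_of_gt hden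
    have hden2' : z ^ eta * u⁻¹ + T * z ^ eta ≠ 0 := ne_of_gt hden2
    simp only [hF, hh, hC, habs, hga, hu2]
    simp only [hg]
    field_simp
  -- integrability of h on Ioo 0 1
  have hexp : (-1:ℝ) < -(2/eta) := by
    have : 2/eta < 1 := by rw [div_lt_one heta0]; linarith
    linarith
  have hint_rpow : IntegrableOn (fun u : ℝ => u ^ (-(2/eta))) (Set.Ioo 0 1) := by
    have := (intervalIntegral.intervalIntegrable_rpow' (a := 0) (b := 1) hexp)
    rw [intervalIntegrable_iff_integrableOn_Ioc_of_le (by norm_num)] at this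
    exact this.mono_set Set.Ioo_subset_Ioc_self
  have hmeas : AEStronglyMeasurable h (volume.restrict (Set.Ioo (0:ℝ) 1)) := by
    apply ContinuousOn.aestronglyMeasurable _ measurableSet_Ioo
    intro u hu
    apply ContinuousWithinAt.div
    · exact (Real.continuousAt_rpow_const u _ (Or.inl (ne_of_gt hu.1))).continuousWithinAt
    · exact ((continuous_const.add (continuous_const.mul continuous_id)).continuousAt
        (x := u)).continuousWithinAt
    · have : (0:ℝ) < 1 + T * u := by nlinarith [hu.1, hT]
      exact ne_of_gt this
  have hint_h : IntegrableOn h (Set.Ioo 0 1) := by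
    apply Integrable.mono' hint_rpow hmeas
    filter_upwards [ae_restrict_mem measurableSet_Ioo] with u hu
    have hu0 : (0:ℝ) < u := hu.1
    have hv : (0:ℝ) ≤ u ^ (-(2/eta)) := le_of_lt (Real.rpow_pos_of_pos hu0 _)
    have hden : (1:ℝ) ≤ 1 + T * u := by nlinarith
    rw [Real.norm_eq_abs, hh, abs_of_nonneg (by positivity)]
    calc u ^ (-(2/eta)) / (1 + T * u) ≤ u ^ (-(2/eta)) / 1 :=
          div_le_div_of_nonneg_left hv (by norm_num) hden
      _ = u ^ (-(2/eta)) := by ring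
  -- integrability of F on Ioi z
  have hintF : IntegrableOn F (Set.Ioi z) := by
    rw [← himg,
      integrableOn_image_iff_integrableOn_abs_deriv_smul measurableSet_Ioo hderiv hinj]
    exact MeasureTheory.IntegrableOn.congr_fun (hint_h.const_mul C)
      (fun u hu => by simpa [smul_eq_mul] using (hpt u hu).symm) measurableSet_Ioo
  -- the integral identity
  have hI : (∫ u in (0:ℝ)..1, u ^ (-(2 / eta)) / (1 + T * u)) = ∫ u in Set.Ioo (0:ℝ) 1, h u := by
    rw [intervalIntegral.integral_of_le (by norm_num : (0:ℝ) ≤ 1),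
      MeasureTheory.integral_Ioc_eq_integral_Ioo]
  have hmain : (∫ r in Set.Ioi z, F r) = C * ∫ u in Set.Ioo (0:ℝ) 1, h u := by
    rw [← himg,
      integral_image_eq_integral_abs_deriv_smul measurableSet_Ioo hderiv hinj]
    rw [MeasureTheory.setIntegral_congr_fun measurableSet_Ioo
      (fun u hu => by simpa [smul_eq_mul] using hpt u hu :
        Set.EqOn (fun u => |g' u| • F (g u)) (fun u => C * h u) (Set.Ioo (0:ℝ) 1))]
    exact MeasureTheory.integral_const_mul C _
  refine ⟨hintF, ?_, ?_⟩
  · rw [hmain, hI]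
  · rw [hmain, hI, hC]
    have : eta - 2 ≠ 0 := by linarith
    field_simp
end
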